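/- One-shot joint source-channel coding over a MAC (Cover–El Gamal–Salehi form): Let q_{S₁S₂} be a pmf on finite sets 𝒮₁ × 𝒮₂ and q_{Y|X₁X₂} a multiple-access channel from 𝒳₁ × 𝒳₂ to 𝒴. Let k₁ : 𝒮₁ → 𝒦 and k₂ : 𝒮₂ → 𝒦 be functions with k₁(s₁) = k₂(s₂) whenever q_{S₁S₂}(s₁,s₂) > 0, and set K = k₁(S₁) (a common part of S₁ and S₂). For any joint pmf of the form q(s₁,s₂,t,x₁,x₂,y) = q(s₁,s₂)·q(t)·q(x₁|s₁,t)·q(x₂|s₂,t)·q(y|x₁,x₂), there exists a code (stochastic encoders φ_k : 𝒮_k → 𝒳_k for k = 1,2 and a stochastic decoder ψ : 𝒴 → 𝒮₁ × 𝒮₂) whose probability of correct decoding satisfies P[ ψ(Y) = (S₁,S₂) ] ≥ E_q [ ( 1 + 2^{h_q(S₁|S₂) − i_q(Y;X₁|X₂,S₂,T)} + 2^{h_q(S₂|S₁) − i_q(Y;X₂|X₁,S₁,T)} + 2^{h_q(S₁,S₂|K) − i_q(Y;X₁,X₂|K,T)} + 2^{h_q(S₁,S₂) − i_q(Y;X₁,X₂)}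 )^{−1} ]. -/

import Mathlib

open scoped BigOperators

/-- A pmf on a finite type, represented by a nonnegative real-valued function summing to 1. -/
structure FinPMF (α : Type) [Fintype α] where
  p : α → ℝ
  nonneg : ∀ a, 0 ≤ p a
  sum_eq_one : ∑ a, p a = 1

open Classical in
/-- Indicator of a proposition, as a real number. -/
noncomputable def ind (P : Prop) : ℝ := if P then 1 else 0

variable {S1 S2 K T X1 X2 Y : Type}
  [Fintype S1] [Fintype S2] [Fintype K] [Fintype T]
  [Fintype X1] [Fintype X2] [Fintype Y]

/-- The joint pmf
`q(s₁,s₂,t,x₁,x₂,y) = q(s₁,s₂) q(t) q(x₁|s₁,t) q(x₂|s₂,t) q(y|x₁,x₂)`. -/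
noncomputable def qMAC (qS : FinPMF (S1 × S2)) (qT : FinPMF T)
    (qX1 : S1 → T → FinPMF X1) (qX2 : S2 → T → FinPMF X2)
    (Wch : X1 → X2 → FinPMF Y)
    (s1 : S1) (s2 : S2) (t : T) (x1 : X1) (x2 : X2) (y : Y) : ℝ :=
  qS.p (s1, s2) * qT.p t * (qX1 s1 t).p x1 * (qX2 s2 t).p x2 * (Wch x1 x2).p y

noncomputable def mgS1 (qS : FinPMF (S1 × S2)) (s1 : S1) : ℝ :=
  ∑ s2 : S2, qS.p (s1, s2)

noncomputable def mgS2 (qS : FinPMF (S1 × S2)) (s2 : S2) : ℝ :=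
  ∑ s1 : S1, qS.p (s1, s2)

/-- Marginal pmf of the common part `K = k₁(S₁)`. -/
noncomputable def mgK (qS : FinPMF (S1 × S2)) (k1 : S1 → K) (k : K) : ℝ :=
  ∑ s1 : S1, ∑ s2 : S2, ind (k1 s1 = k) * qS.p (s1, s2)

section Marginals

variable (qS : FinPMF (S1 × S2)) (qT : FinPMF T)
  (qX1 : S1 → T → FinPMF X1) (qX2 : S2 → T → FinPMF X2) (Wch : X1 → X2 → FinPMF Y)

noncomputable def mX2S2T (x2 : X2) (s2 : S2) (t : T) : ℝ :=
  ∑ s1 : S1, ∑ x1 : X1, ∑ y : Y, qMAC qS qT qX1 qX2 Wch s1 s2 t x1 x2 y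

noncomputable def mX1X2S2T (x1 : X1) (x2 : X2) (s2 : S2) (t : T) : ℝ :=
  ∑ s1 : S1, ∑ y : Y, qMAC qS qT qX1 qX2 Wch s1 s2 t x1 x2 y

noncomputable def mYX2S2T (y : Y) (x2 : X2) (s2 : S2) (t : T) : ℝ :=
  ∑ s1 : S1, ∑ x1 : X1, qMAC qS qT qX1 qX2 Wch s1 s2 t x1 x2 y

noncomputable def mYX1X2S2T (y : Y) (x1 : X1) (x2 : X2) (s2 : S2) (t : T) : ℝ :=
  ∑ s1 : S1, qMAC qS qT qX1 qX2 Wch s1 s2 t x1 x2 y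

noncomputable def mX1S1T (x1 : X1) (s1 : S1) (t : T) : ℝ :=
  ∑ s2 : S2, ∑ x2 : X2, ∑ y : Y, qMAC qS qT qX1 qX2 Wch s1 s2 t x1 x2 y

noncomputable def mX1X2S1T (x1 : X1) (x2 : X2) (s1 : S1) (t : T) : ℝ :=
  ∑ s2 : S2, ∑ y : Y, qMAC qS qT qX1 qX2 Wch s1 s2 t x1 x2 y

noncomputable def mYX1S1T (y : Y) (x1 : X1) (s1 : S1) (t : T) : ℝ :=
  ∑ s2 : S2, ∑ x2 : X2, qMAC qS qT qX1 qX2 Wch s1 s2 t x1 x2 y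

noncomputable def mYX1X2S1T (y : Y) (x1 : X1) (x2 : X2) (s1 : S1) (t : T) : ℝ :=
  ∑ s2 : S2, qMAC qS qT qX1 qX2 Wch s1 s2 t x1 x2 y

noncomputable def mKT (k1 : S1 → K) (k : K) (t : T) : ℝ :=
  ∑ s1 : S1, ∑ s2 : S2, ∑ x1 : X1, ∑ x2 : X2, ∑ y : Y,
    ind (k1 s1 = k) * qMAC qS qT qX1 qX2 Wch s1 s2 t x1 x2 y

noncomputable def mX1X2KT (k1 : S1 → K) (x1 : X1) (x2 : X2) (k : K) (t : T) : ℝ :=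
  ∑ s1 : S1, ∑ s2 : S2, ∑ y : Y,
    ind (k1 s1 = k) * qMAC qS qT qX1 qX2 Wch s1 s2 t x1 x2 y

noncomputable def mYKT (k1 : S1 → K) (y : Y) (k : K) (t : T) : ℝ :=
  ∑ s1 : S1, ∑ s2 : S2, ∑ x1 : X1, ∑ x2 : X2,
    ind (k1 s1 = k) * qMAC qS qT qX1 qX2 Wch s1 s2 t x1 x2 y

noncomputable def mYX1X2KT (k1 : S1 → K) (y : Y) (x1 : X1) (x2 : X2) (k : K) (t : T) : ℝ :=
  ∑ s1 : S1, ∑ s2 : S2,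
    ind (k1 s1 = k) * qMAC qS qT qX1 qX2 Wch s1 s2 t x1 x2 y

noncomputable def mX1X2 (x1 : X1) (x2 : X2) : ℝ :=
  ∑ s1 : S1, ∑ s2 : S2, ∑ t : T, ∑ y : Y, qMAC qS qT qX1 qX2 Wch s1 s2 t x1 x2 y

noncomputable def mY (y : Y) : ℝ :=
  ∑ s1 : S1, ∑ s2 : S2, ∑ t : T, ∑ x1 : X1, ∑ x2 : X2,
    qMAC qS qT qX1 qX2 Wch s1 s2 t x1 x2 y

noncomputable def mYX1X2 (y : Y) (x1 : X1) (x2 : X2) : ℝ :=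
  ∑ s1 : S1, ∑ s2 : S2, ∑ t : T, qMAC qS qT qX1 qX2 Wch s1 s2 t x1 x2 y

/-- Conditional information `h_q(S₁|S₂)`. -/
noncomputable def hS1cS2 (s1 : S1) (s2 : S2) : ℝ :=
  -Real.logb 2 (qS.p (s1, s2) / mgS2 qS s2)

/-- Conditional information `h_q(S₂|S₁)`. -/
noncomputable def hS2cS1 (s1 : S1) (s2 : S2) : ℝ :=
  -Real.logb 2 (qS.p (s1, s2) / mgS1 qS s1)

/-- Conditional information `h_q(S₁,S₂|K)` evaluated at `k = k₁(s₁)`. -/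
noncomputable def hS1S2cK (k1 : S1 → K) (s1 : S1) (s2 : S2) : ℝ :=
  -Real.logb 2 (qS.p (s1, s2) / mgK qS k1 (k1 s1))

/-- Information `h_q(S₁,S₂)`. -/
noncomputable def hS1S2 (s1 : S1) (s2 : S2) : ℝ :=
  -Real.logb 2 (qS.p (s1, s2))

/-- Conditional information density `i_q(Y;X₁|X₂,S₂,T)`. -/
noncomputable def iYX1cX2S2T (y : Y) (x1 : X1) (x2 : X2) (s2 : S2) (t : T) : ℝ :=
  Real.logb 2 (mYX1X2S2T qS qT qX1 qX2 Wch y x1 x2 s2 t * mX2S2T qS qT qX1 qX2 Wch x2 s2 t /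
    (mYX2S2T qS qT qX1 qX2 Wch y x2 s2 t * mX1X2S2T qS qT qX1 qX2 Wch x1 x2 s2 t))

/-- Conditional information density `i_q(Y;X₂|X₁,S₁,T)`. -/
noncomputable def iYX2cX1S1T (y : Y) (x1 : X1) (x2 : X2) (s1 : S1) (t : T) : ℝ :=
  Real.logb 2 (mYX1X2S1T qS qT qX1 qX2 Wch y x1 x2 s1 t * mX1S1T qS qT qX1 qX2 Wch x1 s1 t /
    (mYX1S1T qS qT qX1 qX2 Wch y x1 s1 t * mX1X2S1T qS qT qX1 qX2 Wch x1 x2 s1 t))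

/-- Conditional information density `i_q(Y;X₁,X₂|K,T)`, evaluated at `k`. -/
noncomputable def iYX1X2cKT (k1 : S1 → K) (y : Y) (x1 : X1) (x2 : X2) (k : K) (t : T) : ℝ :=
  Real.logb 2 (mYX1X2KT qS qT qX1 qX2 Wch k1 y x1 x2 k t * mKT qS qT qX1 qX2 Wch k1 k t /
    (mYKT qS qT qX1 qX2 Wch k1 y k t * mX1X2KT qS qT qX1 qX2 Wch k1 x1 x2 k t))

/-- Information density `i_q(Y;X₁,X₂)`. -/
noncomputable def iYX1X2 (y : Y) (x1 : X1) (x2 : X2) : ℝ :=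
  Real.logb 2 (mYX1X2 qS qT qX1 qX2 Wch y x1 x2 /
    (mX1X2 qS qT qX1 qX2 Wch x1 x2 * mY qS qT qX1 qX2 Wch y))

end Marginals

/-- Probability of correct decoding `P[ψ(Y) = (S₁,S₂)]` of a code for lossless
transmission of correlated sources over a MAC: `(S₁,S₂) ~ q_{S₁S₂}`, `X_k` generated
by the stochastic encoder `φ_k` from `S_k` (with independent encoder randomness),
and `Y` by the channel. -/
noncomputable def pCorrectMAC (qS : FinPMF (S1 × S2)) (Wch : X1 → X2 → FinPMF Y)
    (enc1 : S1 → FinPMF X1) (enc2 : S2 → FinPMF X2)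
    (dec : Y → FinPMF (S1 × S2)) : ℝ :=
  ∑ s1 : S1, ∑ s2 : S2, ∑ x1 : X1, ∑ x2 : X2, ∑ y : Y,
    qS.p (s1, s2) * (enc1 s1).p x1 * (enc2 s2).p x2 * (Wch x1 x2).p y *
      (dec y).p (s1, s2)


namespace OneShotAux


lemma ind_of {P : Prop} (h : P) : ind P = 1 := by unfold ind; exact if_pos h

lemma ind_of_not {P : Prop} (h : ¬ P) : ind P = 0 := by unfold ind; exact if_neg h

lemma ind_eq_ite (P : Prop) [Decidable P] : ind P = if P then (1:ℝ) else 0 := by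
  by_cases h : P
  · rw [ind_of h, if_pos h]
  · rw [ind_of_not h, if_neg h]

lemma ind_nonneg (P : Prop) : 0 ≤ ind P := by
  unfold ind; split <;> norm_num

lemma ind_le_one (P : Prop) : ind P ≤ 1 := by
  unfold ind; split <;> norm_num

lemma ind_mul_eq {P : Prop} {x y : ℝ} (h : P → x = y) : ind P * x = ind P * y := by
  by_cases hP : P
  · rw [h hP]
  · rw [ind_of_not hP, zero_mul, zero_mul]

lemma sum_ind_eq {γ : Type*} [Fintype γ] (c : γ) : ∑ x : γ, ind (x = c) = 1 := by
  classical
  simp only [ind_eq_ite]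
  rw [Finset.sum_ite_eq' Finset.univ c fun _ => (1:ℝ)]
  simp

lemma sum_ind_eq' {γ : Type*} [Fintype γ] (c : γ) : ∑ x : γ, ind (c = x) = 1 := by
  classical
  simp only [ind_eq_ite]
  rw [Finset.sum_ite_eq Finset.univ c fun _ => (1:ℝ)]
  simp

lemma sum_ind_mul {γ : Type*} [Fintype γ] (c : γ) (h : γ → ℝ) :
    ∑ x : γ, ind (x = c) * h x = h c := by
  classical
  simp only [ind_eq_ite, ite_mul, one_mul, zero_mul]
  rw [Finset.sum_ite_eq' Finset.univ c h]
  simp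

lemma FinPMF.le_one {α : Type} [Fintype α] (q : FinPMF α) (a : α) : q.p a ≤ 1 := by
  rw [← q.sum_eq_one]
  exact Finset.single_le_sum (fun i _ => q.nonneg i) (Finset.mem_univ a)

lemma FinPMF.nonempty {α : Type} [Fintype α] (q : FinPMF α) : Nonempty α := by
  by_contra h
  have : IsEmpty α := not_nonempty_iff.mp h
  have := q.sum_eq_one
  rw [Finset.univ_eq_empty, Finset.sum_empty] at this
  norm_num at this

section Pi

variable {ι B : Type*} [Fintype ι] [DecidableEq ι] [Fintype B]

lemma sum_pi_prod (w : ι → B → ℝ) :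
    ∑ f : ι → B, ∏ a, w a (f a) = ∏ a, ∑ b, w a b := by
  classical
  rw [Finset.prod_univ_sum]
  rw [Fintype.piFinset_univ]

lemma prod_ite_single (a₀ : ι) (c : ι → ℝ) :
    (∏ a, if a = a₀ then c a else 1) = c a₀ := by
  rw [Finset.prod_ite_eq' Finset.univ a₀ c]
  simp

lemma prod_ite_pair {a₀ a₁ : ι} (hne : a₀ ≠ a₁) (u v : ι → ℝ) :
    (∏ a, if a = a₀ then u a else if a = a₁ then v a else 1) = u a₀ * v a₁ := by
  classical
  have h1 : ∀ x ∈ Finset.univ, x ∉ ({a₀, a₁} : Finset ι) →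
      (if x = a₀ then u x else if x = a₁ then v x else 1) = 1 := by
    intro x _ hx
    simp only [Finset.mem_insert, Finset.mem_singleton] at hx
    push_neg at hx
    rw [if_neg hx.1, if_neg hx.2]
  rw [← Finset.prod_subset (Finset.subset_univ ({a₀, a₁} : Finset ι)) h1]
  rw [Finset.prod_pair hne]
  simp [Ne.symm hne]

lemma sum_pi_pin (p : ι → B → ℝ) (h1 : ∀ a, ∑ b, p a b = 1) (a₀ : ι) (b₀ : B) :
    ∑ f : ι → B, (∏ a, p a (f a)) * ind (f a₀ = b₀) = p a₀ b₀ := by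
  classical
  have key : ∀ f : ι → B, (∏ a, p a (f a)) * ind (f a₀ = b₀)
      = ∏ a, (p a (f a) * (if a = a₀ then ind (f a = b₀) else 1)) := by
    intro f
    rw [Finset.prod_mul_distrib]
    congr 1
    rw [prod_ite_single a₀ (fun a => ind (f a = b₀))]
  rw [Finset.sum_congr rfl fun f _ => key f]
  refine (sum_pi_prod (fun a b => p a b * (if a = a₀ then ind (b = b₀) else 1))).trans ?_
  have row : ∀ a, (∑ b, p a b * (if a = a₀ then ind (b = b₀) else 1))
      = if a = a₀ then p a₀ b₀ else 1 := by
    intro a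
    by_cases ha : a = a₀
    · subst ha
      simp only [if_pos rfl]
      rw [Finset.sum_congr rfl fun b _ => (mul_comm (p a b) _)]
      exact sum_ind_mul b₀ (p a)
    · simp only [if_neg ha, mul_one]
      exact h1 a
  rw [Finset.prod_congr rfl fun a _ => row a]
  rw [prod_ite_single a₀ (fun _ => p a₀ b₀)]

lemma sum_pi_pin_eval (p : ι → B → ℝ) (h1 : ∀ a, ∑ b, p a b = 1) {a₀ a₁ : ι}
    (hne : a₀ ≠ a₁) (b₀ : B) (φ : B → ℝ) :
    ∑ f : ι → B, (∏ a, p a (f a)) * (ind (f a₀ = b₀) * φ (f a₁))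
      = p a₀ b₀ * ∑ b, p a₁ b * φ b := by
  classical
  have key : ∀ f : ι → B, (∏ a, p a (f a)) * (ind (f a₀ = b₀) * φ (f a₁))
      = ∏ a, (p a (f a) *
          (if a = a₀ then ind (f a = b₀) else if a = a₁ then φ (f a) else 1)) := by
    intro f
    rw [Finset.prod_mul_distrib]
    congr 1
    rw [prod_ite_pair hne (fun a => ind (f a = b₀)) (fun a => φ (f a))]
  rw [Finset.sum_congr rfl fun f _ => key f]
  refine (sum_pi_prod (fun a b => p a b *
      (if a = a₀ then ind (b = b₀) else if a = a₁ then φ b else 1))).trans ?_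
  have row : ∀ a, (∑ b, p a b * (if a = a₀ then ind (b = b₀) else if a = a₁ then φ b else 1))
      = if a = a₀ then p a₀ b₀ else if a = a₁ then (∑ b, p a₁ b * φ b) else 1 := by
    intro a
    by_cases ha0 : a = a₀
    · subst ha0
      simp only [if_pos rfl]
      rw [Finset.sum_congr rfl fun b _ => (mul_comm (p a b) _)]
      exact sum_ind_mul b₀ (p a)
    · by_cases ha1 : a = a₁
      · subst ha1
        simp [if_neg ha0]
      · simp only [if_neg ha0, if_neg ha1, mul_one]
        exact h1 a
  rw [Finset.prod_congr rfl fun a _ => row a]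
  rw [prod_ite_pair hne (fun _ => p a₀ b₀) (fun _ => ∑ b, p a₁ b * φ b)]

lemma sum_pi_pin_eval_same (p : ι → B → ℝ) (h1 : ∀ a, ∑ b, p a b = 1) (a₀ : ι)
    (b₀ : B) (φ : B → ℝ) :
    ∑ f : ι → B, (∏ a, p a (f a)) * (ind (f a₀ = b₀) * φ (f a₀))
      = p a₀ b₀ * φ b₀ := by
  have key : ∀ f : ι → B, (∏ a, p a (f a)) * (ind (f a₀ = b₀) * φ (f a₀))
      = ((∏ a, p a (f a)) * ind (f a₀ = b₀)) * φ b₀ := by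
    intro f
    have h2 : ind (f a₀ = b₀) * φ (f a₀) = ind (f a₀ = b₀) * φ b₀ :=
      ind_mul_eq (fun h => by rw [h])
    rw [h2]; ring
  rw [Finset.sum_congr rfl fun f _ => key f, ← Finset.sum_mul,
    sum_pi_pin p h1 a₀ b₀]

lemma sum_pi_one (p : ι → B → ℝ) (h1 : ∀ a, ∑ b, p a b = 1) :
    ∑ f : ι → B, (∏ a, p a (f a)) = 1 := by
  rw [sum_pi_prod]
  rw [Finset.prod_congr rfl fun a _ => h1 a]
  exact Finset.prod_const_one

lemma prod_pi_nonneg (p : ι → B → ℝ) (h0 : ∀ a b, 0 ≤ p a b) (f : ι → B) :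
    0 ≤ ∏ a, p a (f a) :=
  Finset.prod_nonneg fun a _ => h0 a (f a)

end Pi

section Scheme

variable {S1 S2 K T X1 X2 Y : Type}
  [Fintype S1] [Fintype S2] [Fintype K] [Fintype T]
  [Fintype X1] [Fintype X2] [Fintype Y]

lemma sum_collapse_r {α : Type} [Fintype α] (q : FinPMF α) (c : ℝ) :
    (∑ a, c * q.p a) = c := by
  rw [← Finset.mul_sum, q.sum_eq_one, mul_one]

/-! ### Auxiliary quantities -/

noncomputable def qb1 (qX1 : S1 → T → FinPMF X1) (Wch : X1 → X2 → FinPMF Y)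
    (t : T) (y : Y) (x2 : X2) (s1' : S1) : ℝ :=
  ∑ xh1, (qX1 s1' t).p xh1 * (Wch xh1 x2).p y

noncomputable def qb2 (qX2 : S2 → T → FinPMF X2) (Wch : X1 → X2 → FinPMF Y)
    (t : T) (y : Y) (x1 : X1) (s2' : S2) : ℝ :=
  ∑ xh2, (qX2 s2' t).p xh2 * (Wch x1 xh2).p y

noncomputable def qtl (qX1 : S1 → T → FinPMF X1) (qX2 : S2 → T → FinPMF X2)
    (Wch : X1 → X2 → FinPMF Y) (t : T) (y : Y) (sh : S1 × S2) : ℝ :=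
  ∑ xh1, (qX1 sh.1 t).p xh1 * qb2 qX2 Wch t y xh1 sh.2

noncomputable def alA (qS : FinPMF (S1 × S2)) (qX1 : S1 → T → FinPMF X1)
    (s2 : S2) (t : T) (x1 : X1) : ℝ :=
  ∑ s1', qS.p (s1', s2) * (qX1 s1' t).p x1

noncomputable def betA (qS : FinPMF (S1 × S2)) (qX1 : S1 → T → FinPMF X1)
    (Wch : X1 → X2 → FinPMF Y) (s2 : S2) (t : T) (y : Y) (x2 : X2) : ℝ :=
  ∑ s1', qS.p (s1', s2) * qb1 qX1 Wch t y x2 s1'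

noncomputable def alB (qS : FinPMF (S1 × S2)) (qX2 : S2 → T → FinPMF X2)
    (s1 : S1) (t : T) (x2 : X2) : ℝ :=
  ∑ s2', qS.p (s1, s2') * (qX2 s2' t).p x2

noncomputable def betB (qS : FinPMF (S1 × S2)) (qX2 : S2 → T → FinPMF X2)
    (Wch : X1 → X2 → FinPMF Y) (s1 : S1) (t : T) (y : Y) (x1 : X1) : ℝ :=
  ∑ s2', qS.p (s1, s2') * qb2 qX2 Wch t y x1 s2'

noncomputable def alC (qS : FinPMF (S1 × S2)) (qX1 : S1 → T → FinPMF X1)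
    (qX2 : S2 → T → FinPMF X2) (k1 : S1 → K) (k : K) (t : T) (x1 : X1) (x2 : X2) : ℝ :=
  ∑ sh : S1 × S2, ind (k1 sh.1 = k) * (qS.p sh * ((qX1 sh.1 t).p x1 * (qX2 sh.2 t).p x2))

noncomputable def gamC (qS : FinPMF (S1 × S2)) (qX1 : S1 → T → FinPMF X1)
    (qX2 : S2 → T → FinPMF X2) (Wch : X1 → X2 → FinPMF Y) (k1 : S1 → K)
    (k : K) (t : T) (y : Y) : ℝ :=
  ∑ sh : S1 × S2, ind (k1 sh.1 = k) * (qS.p sh * qtl qX1 qX2 Wch t y sh)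

noncomputable def alD (qS : FinPMF (S1 × S2)) (qT : FinPMF T)
    (qX1 : S1 → T → FinPMF X1) (qX2 : S2 → T → FinPMF X2) (x1 : X1) (x2 : X2) : ℝ :=
  ∑ sh : S1 × S2, qS.p sh * ∑ t', qT.p t' * ((qX1 sh.1 t').p x1 * (qX2 sh.2 t').p x2)

noncomputable def delD (qS : FinPMF (S1 × S2)) (qT : FinPMF T)
    (qX1 : S1 → T → FinPMF X1) (qX2 : S2 → T → FinPMF X2)
    (Wch : X1 → X2 → FinPMF Y) (y : Y) : ℝ :=
  ∑ sh : S1 × S2, qS.p sh * ∑ t', qT.p t' * qtl qX1 qX2 Wch t' y sh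

section Marginals

variable (qS : FinPMF (S1 × S2)) (qT : FinPMF T)
  (qX1 : S1 → T → FinPMF X1) (qX2 : S2 → T → FinPMF X2) (Wch : X1 → X2 → FinPMF Y)

/-! ### Factorization of the A-group marginals -/

lemma mX2S2T_eq (x2 : X2) (s2 : S2) (t : T) :
    mX2S2T qS qT qX1 qX2 Wch x2 s2 t = qT.p t * ((qX2 s2 t).p x2 * mgS2 qS s2) := by
  unfold mX2S2T qMAC mgS2
  have h1 : ∀ s1' : S1,
      (∑ x1 : X1, ∑ y : Y, qS.p (s1', s2) * qT.p t * (qX1 s1' t).p x1 *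
        (qX2 s2 t).p x2 * (Wch x1 x2).p y)
      = qT.p t * ((qX2 s2 t).p x2 * qS.p (s1', s2)) := by
    intro s1'
    have h2 : ∀ x1 : X1,
        (∑ y : Y, qS.p (s1', s2) * qT.p t * (qX1 s1' t).p x1 *
          (qX2 s2 t).p x2 * (Wch x1 x2).p y)
        = (qT.p t * ((qX2 s2 t).p x2 * qS.p (s1', s2))) * (qX1 s1' t).p x1 := by
      intro x1
      rw [sum_collapse_r (Wch x1 x2)]
      ring
    rw [Finset.sum_congr rfl fun x1 _ => h2 x1, sum_collapse_r (qX1 s1' t)]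
  rw [Finset.sum_congr rfl fun s1' _ => h1 s1']
  simp only [← Finset.mul_sum]

lemma mX1X2S2T_eq (x1 : X1) (x2 : X2) (s2 : S2) (t : T) :
    mX1X2S2T qS qT qX1 qX2 Wch x1 x2 s2 t
      = qT.p t * ((qX2 s2 t).p x2 * alA qS qX1 s2 t x1) := by
  unfold mX1X2S2T qMAC alA
  have h1 : ∀ s1' : S1,
      (∑ y : Y, qS.p (s1', s2) * qT.p t * (qX1 s1' t).p x1 *
        (qX2 s2 t).p x2 * (Wch x1 x2).p y)
      = qT.p t * ((qX2 s2 t).p x2 * (qS.p (s1', s2) * (qX1 s1' t).p x1)) := by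
    intro s1'
    rw [sum_collapse_r (Wch x1 x2)]
    ring
  rw [Finset.sum_congr rfl fun s1' _ => h1 s1']
  simp only [← Finset.mul_sum]

lemma mYX2S2T_eq (y : Y) (x2 : X2) (s2 : S2) (t : T) :
    mYX2S2T qS qT qX1 qX2 Wch y x2 s2 t
      = qT.p t * ((qX2 s2 t).p x2 * betA qS qX1 Wch s2 t y x2) := by
  unfold mYX2S2T qMAC betA qb1
  have h1 : ∀ s1' : S1,
      (∑ x1 : X1, qS.p (s1', s2) * qT.p t * (qX1 s1' t).p x1 *
        (qX2 s2 t).p x2 * (Wch x1 x2).p y)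
      = qT.p t * ((qX2 s2 t).p x2 *
          (qS.p (s1', s2) * ∑ xh1, (qX1 s1' t).p xh1 * (Wch xh1 x2).p y)) := by
    intro s1'
    have h2 : ∀ xh1 : X1, qS.p (s1', s2) * qT.p t * (qX1 s1' t).p xh1 *
          (qX2 s2 t).p x2 * (Wch xh1 x2).p y
        = (qT.p t * ((qX2 s2 t).p x2 * qS.p (s1', s2))) *
            ((qX1 s1' t).p xh1 * (Wch xh1 x2).p y) := fun xh1 => by ring
    rw [Finset.sum_congr rfl fun xh1 _ => h2 xh1, ← Finset.mul_sum]
    ring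
  rw [Finset.sum_congr rfl fun s1' _ => h1 s1']
  simp only [← Finset.mul_sum]

lemma mYX1X2S2T_eq (y : Y) (x1 : X1) (x2 : X2) (s2 : S2) (t : T) :
    mYX1X2S2T qS qT qX1 qX2 Wch y x1 x2 s2 t
      = qT.p t * ((qX2 s2 t).p x2 * ((Wch x1 x2).p y * alA qS qX1 s2 t x1)) := by
  unfold mYX1X2S2T qMAC alA
  have h1 : ∀ s1' : S1, qS.p (s1', s2) * qT.p t * (qX1 s1' t).p x1 *
        (qX2 s2 t).p x2 * (Wch x1 x2).p y
      = qT.p t * ((qX2 s2 t).p x2 * ((Wch x1 x2).p y *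
          (qS.p (s1', s2) * (qX1 s1' t).p x1))) := fun s1' => by ring
  rw [Finset.sum_congr rfl fun s1' _ => h1 s1']
  simp only [← Finset.mul_sum]

/-! ### Factorization of the B-group marginals -/

lemma mX1S1T_eq (x1 : X1) (s1 : S1) (t : T) :
    mX1S1T qS qT qX1 qX2 Wch x1 s1 t = qT.p t * ((qX1 s1 t).p x1 * mgS1 qS s1) := by
  unfold mX1S1T qMAC mgS1
  have h1 : ∀ s2' : S2,
      (∑ x2 : X2, ∑ y : Y, qS.p (s1, s2') * qT.p t * (qX1 s1 t).p x1 *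
        (qX2 s2' t).p x2 * (Wch x1 x2).p y)
      = qT.p t * ((qX1 s1 t).p x1 * qS.p (s1, s2')) := by
    intro s2'
    have h2 : ∀ x2 : X2,
        (∑ y : Y, qS.p (s1, s2') * qT.p t * (qX1 s1 t).p x1 *
          (qX2 s2' t).p x2 * (Wch x1 x2).p y)
        = (qT.p t * ((qX1 s1 t).p x1 * qS.p (s1, s2'))) * (qX2 s2' t).p x2 := by
      intro x2
      rw [sum_collapse_r (Wch x1 x2)]
      ring
    rw [Finset.sum_congr rfl fun x2 _ => h2 x2, sum_collapse_r (qX2 s2' t)]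
  rw [Finset.sum_congr rfl fun s2' _ => h1 s2']
  simp only [← Finset.mul_sum]

lemma mX1X2S1T_eq (x1 : X1) (x2 : X2) (s1 : S1) (t : T) :
    mX1X2S1T qS qT qX1 qX2 Wch x1 x2 s1 t
      = qT.p t * ((qX1 s1 t).p x1 * alB qS qX2 s1 t x2) := by
  unfold mX1X2S1T qMAC alB
  have h1 : ∀ s2' : S2,
      (∑ y : Y, qS.p (s1, s2') * qT.p t * (qX1 s1 t).p x1 *
        (qX2 s2' t).p x2 * (Wch x1 x2).p y)
      = qT.p t * ((qX1 s1 t).p x1 * (qS.p (s1, s2') * (qX2 s2' t).p x2)) := by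
    intro s2'
    rw [sum_collapse_r (Wch x1 x2)]
    ring
  rw [Finset.sum_congr rfl fun s2' _ => h1 s2']
  simp only [← Finset.mul_sum]

lemma mYX1S1T_eq (y : Y) (x1 : X1) (s1 : S1) (t : T) :
    mYX1S1T qS qT qX1 qX2 Wch y x1 s1 t
      = qT.p t * ((qX1 s1 t).p x1 * betB qS qX2 Wch s1 t y x1) := by
  unfold mYX1S1T qMAC betB qb2
  have h1 : ∀ s2' : S2,
      (∑ x2 : X2, qS.p (s1, s2') * qT.p t * (qX1 s1 t).p x1 *
        (qX2 s2' t).p x2 * (Wch x1 x2).p y)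
      = qT.p t * ((qX1 s1 t).p x1 *
          (qS.p (s1, s2') * ∑ xh2, (qX2 s2' t).p xh2 * (Wch x1 xh2).p y)) := by
    intro s2'
    have h2 : ∀ xh2 : X2, qS.p (s1, s2') * qT.p t * (qX1 s1 t).p x1 *
          (qX2 s2' t).p xh2 * (Wch x1 xh2).p y
        = (qT.p t * ((qX1 s1 t).p x1 * qS.p (s1, s2'))) *
            ((qX2 s2' t).p xh2 * (Wch x1 xh2).p y) := fun xh2 => by ring
    rw [Finset.sum_congr rfl fun xh2 _ => h2 xh2, ← Finset.mul_sum]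
    ring
  rw [Finset.sum_congr rfl fun s2' _ => h1 s2']
  simp only [← Finset.mul_sum]

lemma mYX1X2S1T_eq (y : Y) (x1 : X1) (x2 : X2) (s1 : S1) (t : T) :
    mYX1X2S1T qS qT qX1 qX2 Wch y x1 x2 s1 t
      = qT.p t * ((qX1 s1 t).p x1 * ((Wch x1 x2).p y * alB qS qX2 s1 t x2)) := by
  unfold mYX1X2S1T qMAC alB
  have h1 : ∀ s2' : S2, qS.p (s1, s2') * qT.p t * (qX1 s1 t).p x1 *
        (qX2 s2' t).p x2 * (Wch x1 x2).p y
      = qT.p t * ((qX1 s1 t).p x1 * ((Wch x1 x2).p y *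
          (qS.p (s1, s2') * (qX2 s2' t).p x2))) := fun s2' => by ring
  rw [Finset.sum_congr rfl fun s2' _ => h1 s2']
  simp only [← Finset.mul_sum]

end Marginals

end Scheme

section Scheme2

variable {S1 S2 K T X1 X2 Y : Type}
  [Fintype S1] [Fintype S2] [Fintype K] [Fintype T]
  [Fintype X1] [Fintype X2] [Fintype Y]

variable (qS : FinPMF (S1 × S2)) (qT : FinPMF T)
  (qX1 : S1 → T → FinPMF X1) (qX2 : S2 → T → FinPMF X2) (Wch : X1 → X2 → FinPMF Y)

/-! ### Factorization of the C-group marginals -/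

lemma mKT_eq (k1 : S1 → K) (k : K) (t : T) :
    mKT qS qT qX1 qX2 Wch k1 k t = qT.p t * mgK qS k1 k := by
  unfold mKT qMAC mgK
  have h1 : ∀ s1 : S1, ∀ s2 : S2,
      (∑ x1 : X1, ∑ x2 : X2, ∑ y : Y, ind (k1 s1 = k) *
        (qS.p (s1, s2) * qT.p t * (qX1 s1 t).p x1 * (qX2 s2 t).p x2 * (Wch x1 x2).p y))
      = qT.p t * (ind (k1 s1 = k) * qS.p (s1, s2)) := by
    intro s1 s2
    have h2 : ∀ x1 : X1,
        (∑ x2 : X2, ∑ y : Y, ind (k1 s1 = k) *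
          (qS.p (s1, s2) * qT.p t * (qX1 s1 t).p x1 * (qX2 s2 t).p x2 * (Wch x1 x2).p y))
        = (qT.p t * (ind (k1 s1 = k) * qS.p (s1, s2))) * (qX1 s1 t).p x1 := by
      intro x1
      have h3 : ∀ x2 : X2,
          (∑ y : Y, ind (k1 s1 = k) *
            (qS.p (s1, s2) * qT.p t * (qX1 s1 t).p x1 * (qX2 s2 t).p x2 * (Wch x1 x2).p y))
          = ((qT.p t * (ind (k1 s1 = k) * qS.p (s1, s2))) * (qX1 s1 t).p x1) *
              (qX2 s2 t).p x2 := by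
        intro x2
        have h4 : ∀ y : Y, ind (k1 s1 = k) *
              (qS.p (s1, s2) * qT.p t * (qX1 s1 t).p x1 * (qX2 s2 t).p x2 * (Wch x1 x2).p y)
            = (((qT.p t * (ind (k1 s1 = k) * qS.p (s1, s2))) * (qX1 s1 t).p x1) *
                (qX2 s2 t).p x2) * (Wch x1 x2).p y := fun y => by ring
        rw [Finset.sum_congr rfl fun y _ => h4 y, sum_collapse_r (Wch x1 x2)]
      rw [Finset.sum_congr rfl fun x2 _ => h3 x2, sum_collapse_r (qX2 s2 t)]
    rw [Finset.sum_congr rfl fun x1 _ => h2 x1, sum_collapse_r (qX1 s1 t)]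
  rw [Finset.sum_congr rfl fun s1 _ => Finset.sum_congr rfl fun s2 _ => h1 s1 s2]
  simp only [← Finset.mul_sum]

lemma mX1X2KT_eq (k1 : S1 → K) (x1 : X1) (x2 : X2) (k : K) (t : T) :
    mX1X2KT qS qT qX1 qX2 Wch k1 x1 x2 k t
      = qT.p t * alC qS qX1 qX2 k1 k t x1 x2 := by
  unfold mX1X2KT qMAC alC
  rw [Fintype.sum_prod_type]
  have h1 : ∀ s1 : S1, ∀ s2 : S2,
      (∑ y : Y, ind (k1 s1 = k) *
        (qS.p (s1, s2) * qT.p t * (qX1 s1 t).p x1 * (qX2 s2 t).p x2 * (Wch x1 x2).p y))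
      = qT.p t * (ind (k1 s1 = k) * (qS.p (s1, s2) *
          ((qX1 s1 t).p x1 * (qX2 s2 t).p x2))) := by
    intro s1 s2
    have h4 : ∀ y : Y, ind (k1 s1 = k) *
          (qS.p (s1, s2) * qT.p t * (qX1 s1 t).p x1 * (qX2 s2 t).p x2 * (Wch x1 x2).p y)
        = (qT.p t * (ind (k1 s1 = k) * (qS.p (s1, s2) *
            ((qX1 s1 t).p x1 * (qX2 s2 t).p x2)))) * (Wch x1 x2).p y := fun y => by ring
    rw [Finset.sum_congr rfl fun y _ => h4 y, sum_collapse_r (Wch x1 x2)]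
  rw [Finset.sum_congr rfl fun s1 _ => Finset.sum_congr rfl fun s2 _ => h1 s1 s2]
  simp only [← Finset.mul_sum]

lemma mYX1X2KT_eq (k1 : S1 → K) (y : Y) (x1 : X1) (x2 : X2) (k : K) (t : T) :
    mYX1X2KT qS qT qX1 qX2 Wch k1 y x1 x2 k t
      = qT.p t * ((Wch x1 x2).p y * alC qS qX1 qX2 k1 k t x1 x2) := by
  unfold mYX1X2KT qMAC alC
  rw [Fintype.sum_prod_type]
  have h1 : ∀ s1 : S1, ∀ s2 : S2, ind (k1 s1 = k) *
        (qS.p (s1, s2) * qT.p t * (qX1 s1 t).p x1 * (qX2 s2 t).p x2 * (Wch x1 x2).p y)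
      = qT.p t * ((Wch x1 x2).p y * (ind (k1 s1 = k) * (qS.p (s1, s2) *
          ((qX1 s1 t).p x1 * (qX2 s2 t).p x2)))) := fun s1 s2 => by ring
  rw [Finset.sum_congr rfl fun s1 _ => Finset.sum_congr rfl fun s2 _ => h1 s1 s2]
  simp only [← Finset.mul_sum]

lemma mYKT_eq (k1 : S1 → K) (y : Y) (k : K) (t : T) :
    mYKT qS qT qX1 qX2 Wch k1 y k t
      = qT.p t * gamC qS qX1 qX2 Wch k1 k t y := by
  unfold mYKT qMAC gamC qtl qb2
  rw [Fintype.sum_prod_type]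
  have h1 : ∀ s1 : S1, ∀ s2 : S2,
      (∑ x1 : X1, ∑ x2 : X2, ind (k1 s1 = k) *
        (qS.p (s1, s2) * qT.p t * (qX1 s1 t).p x1 * (qX2 s2 t).p x2 * (Wch x1 x2).p y))
      = qT.p t * (ind (k1 s1 = k) * (qS.p (s1, s2) *
          ∑ xh1, (qX1 s1 t).p xh1 * ∑ xh2, (qX2 s2 t).p xh2 * (Wch xh1 xh2).p y)) := by
    intro s1 s2
    have h2 : ∀ xh1 : X1,
        (∑ xh2 : X2, ind (k1 s1 = k) *
          (qS.p (s1, s2) * qT.p t * (qX1 s1 t).p xh1 * (qX2 s2 t).p xh2 * (Wch xh1 xh2).p y))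
        = (qT.p t * (ind (k1 s1 = k) * qS.p (s1, s2))) *
            ((qX1 s1 t).p xh1 * ∑ xh2, (qX2 s2 t).p xh2 * (Wch xh1 xh2).p y) := by
      intro xh1
      have h3 : ∀ xh2 : X2, ind (k1 s1 = k) *
            (qS.p (s1, s2) * qT.p t * (qX1 s1 t).p xh1 * (qX2 s2 t).p xh2 * (Wch xh1 xh2).p y)
          = ((qT.p t * (ind (k1 s1 = k) * qS.p (s1, s2))) * (qX1 s1 t).p xh1) *
              ((qX2 s2 t).p xh2 * (Wch xh1 xh2).p y) := fun xh2 => by ring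
      rw [Finset.sum_congr rfl fun xh2 _ => h3 xh2, ← Finset.mul_sum]
      ring
    rw [Finset.sum_congr rfl fun xh1 _ => h2 xh1, ← Finset.mul_sum]
    ring
  rw [Finset.sum_congr rfl fun s1 _ => Finset.sum_congr rfl fun s2 _ => h1 s1 s2]
  simp only [← Finset.mul_sum]

/-! ### Factorization of the D-group marginals -/

lemma mX1X2_eq (x1 : X1) (x2 : X2) :
    mX1X2 qS qT qX1 qX2 Wch x1 x2 = alD qS qT qX1 qX2 x1 x2 := by
  unfold mX1X2 qMAC alD
  rw [Fintype.sum_prod_type]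
  have h1 : ∀ s1 : S1, ∀ s2 : S2,
      (∑ t' : T, ∑ y : Y,
        qS.p (s1, s2) * qT.p t' * (qX1 s1 t').p x1 * (qX2 s2 t').p x2 * (Wch x1 x2).p y)
      = qS.p (s1, s2) * ∑ t', qT.p t' * ((qX1 s1 t').p x1 * (qX2 s2 t').p x2) := by
    intro s1 s2
    have h2 : ∀ t' : T,
        (∑ y : Y, qS.p (s1, s2) * qT.p t' * (qX1 s1 t').p x1 * (qX2 s2 t').p x2 *
          (Wch x1 x2).p y)
        = qS.p (s1, s2) * (qT.p t' * ((qX1 s1 t').p x1 * (qX2 s2 t').p x2)) := by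
      intro t'
      rw [sum_collapse_r (Wch x1 x2)]
      ring
    rw [Finset.sum_congr rfl fun t' _ => h2 t', ← Finset.mul_sum]
  rw [Finset.sum_congr rfl fun s1 _ => Finset.sum_congr rfl fun s2 _ => h1 s1 s2]

lemma mYX1X2_eq (y : Y) (x1 : X1) (x2 : X2) :
    mYX1X2 qS qT qX1 qX2 Wch y x1 x2 = (Wch x1 x2).p y * alD qS qT qX1 qX2 x1 x2 := by
  unfold mYX1X2 qMAC alD
  rw [Fintype.sum_prod_type]
  have h1 : ∀ s1 : S1, ∀ s2 : S2,
      (∑ t' : T, qS.p (s1, s2) * qT.p t' * (qX1 s1 t').p x1 * (qX2 s2 t').p x2 *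
        (Wch x1 x2).p y)
      = (Wch x1 x2).p y * (qS.p (s1, s2) *
          ∑ t', qT.p t' * ((qX1 s1 t').p x1 * (qX2 s2 t').p x2)) := by
    intro s1 s2
    have h2 : ∀ t' : T, qS.p (s1, s2) * qT.p t' * (qX1 s1 t').p x1 * (qX2 s2 t').p x2 *
          (Wch x1 x2).p y
        = ((Wch x1 x2).p y * qS.p (s1, s2)) *
            (qT.p t' * ((qX1 s1 t').p x1 * (qX2 s2 t').p x2)) := fun t' => by ring
    rw [Finset.sum_congr rfl fun t' _ => h2 t', ← Finset.mul_sum]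
    ring
  rw [Finset.sum_congr rfl fun s1 _ => Finset.sum_congr rfl fun s2 _ => h1 s1 s2]
  simp only [← Finset.mul_sum]

lemma mY_eq (y : Y) :
    mY qS qT qX1 qX2 Wch y = delD qS qT qX1 qX2 Wch y := by
  unfold mY qMAC delD qtl qb2
  rw [Fintype.sum_prod_type]
  have h1 : ∀ s1 : S1, ∀ s2 : S2,
      (∑ t' : T, ∑ x1 : X1, ∑ x2 : X2,
        qS.p (s1, s2) * qT.p t' * (qX1 s1 t').p x1 * (qX2 s2 t').p x2 * (Wch x1 x2).p y)
      = qS.p (s1, s2) * ∑ t', qT.p t' *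
          ∑ xh1, (qX1 s1 t').p xh1 * ∑ xh2, (qX2 s2 t').p xh2 * (Wch xh1 xh2).p y := by
    intro s1 s2
    have h2 : ∀ t' : T,
        (∑ xh1 : X1, ∑ xh2 : X2,
          qS.p (s1, s2) * qT.p t' * (qX1 s1 t').p xh1 * (qX2 s2 t').p xh2 * (Wch xh1 xh2).p y)
        = qS.p (s1, s2) * (qT.p t' *
            ∑ xh1, (qX1 s1 t').p xh1 * ∑ xh2, (qX2 s2 t').p xh2 * (Wch xh1 xh2).p y) := by
      intro t'
      have h3 : ∀ xh1 : X1,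
          (∑ xh2 : X2, qS.p (s1, s2) * qT.p t' * (qX1 s1 t').p xh1 * (qX2 s2 t').p xh2 *
            (Wch xh1 xh2).p y)
          = (qS.p (s1, s2) * qT.p t') *
              ((qX1 s1 t').p xh1 * ∑ xh2, (qX2 s2 t').p xh2 * (Wch xh1 xh2).p y) := by
        intro xh1
        have h4 : ∀ xh2 : X2, qS.p (s1, s2) * qT.p t' * (qX1 s1 t').p xh1 *
              (qX2 s2 t').p xh2 * (Wch xh1 xh2).p y
            = ((qS.p (s1, s2) * qT.p t') * (qX1 s1 t').p xh1) *
                ((qX2 s2 t').p xh2 * (Wch xh1 xh2).p y) := fun xh2 => by ring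
        rw [Finset.sum_congr rfl fun xh2 _ => h4 xh2, ← Finset.mul_sum]
        ring
      rw [Finset.sum_congr rfl fun xh1 _ => h3 xh1, ← Finset.mul_sum]
      ring
    rw [Finset.sum_congr rfl fun t' _ => h2 t', ← Finset.mul_sum]
  rw [Finset.sum_congr rfl fun s1 _ => Finset.sum_congr rfl fun s2 _ => h1 s1 s2]

end Scheme2

section Pos

variable {S1 S2 K T X1 X2 Y : Type}
  [Fintype S1] [Fintype S2] [Fintype K] [Fintype T]
  [Fintype X1] [Fintype X2] [Fintype Y]

variable (qS : FinPMF (S1 × S2)) (qT : FinPMF T)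
  (qX1 : S1 → T → FinPMF X1) (qX2 : S2 → T → FinPMF X2) (Wch : X1 → X2 → FinPMF Y)

lemma qb1_nonneg (t : T) (y : Y) (x2 : X2) (s1' : S1) : 0 ≤ qb1 qX1 Wch t y x2 s1' :=
  Finset.sum_nonneg fun _ _ => mul_nonneg ((qX1 s1' t).nonneg _) ((Wch _ x2).nonneg _)

lemma qb2_nonneg (t : T) (y : Y) (x1 : X1) (s2' : S2) : 0 ≤ qb2 qX2 Wch t y x1 s2' :=
  Finset.sum_nonneg fun _ _ => mul_nonneg ((qX2 s2' t).nonneg _) ((Wch x1 _).nonneg _)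

lemma qtl_nonneg (t : T) (y : Y) (sh : S1 × S2) : 0 ≤ qtl qX1 qX2 Wch t y sh :=
  Finset.sum_nonneg fun _ _ => mul_nonneg ((qX1 sh.1 t).nonneg _) (qb2_nonneg qX2 Wch _ _ _ _)

lemma betA_nonneg (s2 : S2) (t : T) (y : Y) (x2 : X2) : 0 ≤ betA qS qX1 Wch s2 t y x2 :=
  Finset.sum_nonneg fun _ _ => mul_nonneg (qS.nonneg _) (qb1_nonneg qX1 Wch _ _ _ _)

lemma betB_nonneg (s1 : S1) (t : T) (y : Y) (x1 : X1) : 0 ≤ betB qS qX2 Wch s1 t y x1 :=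
  Finset.sum_nonneg fun _ _ => mul_nonneg (qS.nonneg _) (qb2_nonneg qX2 Wch _ _ _ _)

lemma gamC_nonneg (k1 : S1 → K) (k : K) (t : T) (y : Y) : 0 ≤ gamC qS qX1 qX2 Wch k1 k t y :=
  Finset.sum_nonneg fun _ _ => mul_nonneg (ind_nonneg _)
    (mul_nonneg (qS.nonneg _) (qtl_nonneg qX1 qX2 Wch _ _ _))

lemma delD_nonneg (y : Y) : 0 ≤ delD qS qT qX1 qX2 Wch y :=
  Finset.sum_nonneg fun _ _ => mul_nonneg (qS.nonneg _)
    (Finset.sum_nonneg fun _ _ => mul_nonneg (qT.nonneg _) (qtl_nonneg qX1 qX2 Wch _ _ _))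


lemma mgS2_pos {s1 : S1} {s2 : S2} (hqs : 0 < qS.p (s1, s2)) : 0 < mgS2 qS s2 := by
  unfold mgS2
  exact lt_of_lt_of_le hqs (Finset.single_le_sum (f := fun i => qS.p (i, s2))
    (fun i _ => qS.nonneg (i, s2)) (Finset.mem_univ s1))

lemma mgS1_pos {s1 : S1} {s2 : S2} (hqs : 0 < qS.p (s1, s2)) : 0 < mgS1 qS s1 := by
  unfold mgS1
  exact lt_of_lt_of_le hqs (Finset.single_le_sum (f := fun i => qS.p (s1, i))
    (fun i _ => qS.nonneg (s1, i)) (Finset.mem_univ s2))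

lemma qb1_pos {s1 : S1} {t : T} {x1 : X1} {x2 : X2} {y : Y}
    (h1 : 0 < (qX1 s1 t).p x1) (hW : 0 < (Wch x1 x2).p y) : 0 < qb1 qX1 Wch t y x2 s1 := by
  unfold qb1
  exact lt_of_lt_of_le (mul_pos h1 hW) (Finset.single_le_sum
    (f := fun i => (qX1 s1 t).p i * (Wch i x2).p y)
    (fun i _ => mul_nonneg ((qX1 s1 t).nonneg i) ((Wch i x2).nonneg y)) (Finset.mem_univ x1))

lemma qb2_pos {s2 : S2} {t : T} {x1 : X1} {x2 : X2} {y : Y}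
    (h2 : 0 < (qX2 s2 t).p x2) (hW : 0 < (Wch x1 x2).p y) : 0 < qb2 qX2 Wch t y x1 s2 := by
  unfold qb2
  exact lt_of_lt_of_le (mul_pos h2 hW) (Finset.single_le_sum
    (f := fun i => (qX2 s2 t).p i * (Wch x1 i).p y)
    (fun i _ => mul_nonneg ((qX2 s2 t).nonneg i) ((Wch x1 i).nonneg y)) (Finset.mem_univ x2))

lemma qtl_pos {s1 : S1} {s2 : S2} {t : T} {x1 : X1} {x2 : X2} {y : Y}
    (h1 : 0 < (qX1 s1 t).p x1) (h2 : 0 < (qX2 s2 t).p x2) (hW : 0 < (Wch x1 x2).p y) :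
    0 < qtl qX1 qX2 Wch t y (s1, s2) := by
  unfold qtl
  exact lt_of_lt_of_le (mul_pos h1 (qb2_pos qX2 Wch h2 hW)) (Finset.single_le_sum
    (f := fun i => (qX1 s1 t).p i * qb2 qX2 Wch t y i s2)
    (fun i _ => mul_nonneg ((qX1 s1 t).nonneg i) (qb2_nonneg qX2 Wch t y i s2))
    (Finset.mem_univ x1))

lemma alA_pos {s1 : S1} {s2 : S2} {t : T} {x1 : X1}
    (hqs : 0 < qS.p (s1, s2)) (h1 : 0 < (qX1 s1 t).p x1) : 0 < alA qS qX1 s2 t x1 := by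
  unfold alA
  exact lt_of_lt_of_le (mul_pos hqs h1) (Finset.single_le_sum
    (f := fun i => qS.p (i, s2) * (qX1 i t).p x1)
    (fun i _ => mul_nonneg (qS.nonneg (i, s2)) ((qX1 i t).nonneg x1)) (Finset.mem_univ s1))

lemma alB_pos {s1 : S1} {s2 : S2} {t : T} {x2 : X2}
    (hqs : 0 < qS.p (s1, s2)) (h2 : 0 < (qX2 s2 t).p x2) : 0 < alB qS qX2 s1 t x2 := by
  unfold alB
  exact lt_of_lt_of_le (mul_pos hqs h2) (Finset.single_le_sum
    (f := fun i => qS.p (s1, i) * (qX2 i t).p x2)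
    (fun i _ => mul_nonneg (qS.nonneg (s1, i)) ((qX2 i t).nonneg x2)) (Finset.mem_univ s2))

lemma betA_pos {s1 : S1} {s2 : S2} {t : T} {x1 : X1} {x2 : X2} {y : Y}
    (hqs : 0 < qS.p (s1, s2)) (h1 : 0 < (qX1 s1 t).p x1) (hW : 0 < (Wch x1 x2).p y) :
    0 < betA qS qX1 Wch s2 t y x2 := by
  unfold betA
  exact lt_of_lt_of_le (mul_pos hqs (qb1_pos qX1 Wch h1 hW)) (Finset.single_le_sum
    (f := fun i => qS.p (i, s2) * qb1 qX1 Wch t y x2 i)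
    (fun i _ => mul_nonneg (qS.nonneg (i, s2)) (qb1_nonneg qX1 Wch t y x2 i))
    (Finset.mem_univ s1))

lemma betB_pos {s1 : S1} {s2 : S2} {t : T} {x1 : X1} {x2 : X2} {y : Y}
    (hqs : 0 < qS.p (s1, s2)) (h2 : 0 < (qX2 s2 t).p x2) (hW : 0 < (Wch x1 x2).p y) :
    0 < betB qS qX2 Wch s1 t y x1 := by
  unfold betB
  exact lt_of_lt_of_le (mul_pos hqs (qb2_pos qX2 Wch h2 hW)) (Finset.single_le_sum
    (f := fun i => qS.p (s1, i) * qb2 qX2 Wch t y x1 i)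
    (fun i _ => mul_nonneg (qS.nonneg (s1, i)) (qb2_nonneg qX2 Wch t y x1 i))
    (Finset.mem_univ s2))

lemma mgK_pos {s1 : S1} {s2 : S2} (hqs : 0 < qS.p (s1, s2)) (k1 : S1 → K) :
    0 < mgK qS k1 (k1 s1) := by
  unfold mgK
  have hterm : 0 < ind (k1 s1 = k1 s1) * qS.p (s1, s2) := by
    rw [ind_of rfl, one_mul]; exact hqs
  refine lt_of_lt_of_le ?_ (Finset.single_le_sum
    (f := fun i => ∑ s2' : S2, ind (k1 i = k1 s1) * qS.p (i, s2'))
    (fun i _ => Finset.sum_nonneg fun j _ => mul_nonneg (ind_nonneg _) (qS.nonneg (i, j)))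
    (Finset.mem_univ s1))
  exact lt_of_lt_of_le hterm (Finset.single_le_sum
    (f := fun j => ind (k1 s1 = k1 s1) * qS.p (s1, j))
    (fun j _ => mul_nonneg (ind_nonneg _) (qS.nonneg (s1, j))) (Finset.mem_univ s2))

lemma alC_pos {s1 : S1} {s2 : S2} {t : T} {x1 : X1} {x2 : X2}
    (hqs : 0 < qS.p (s1, s2)) (h1 : 0 < (qX1 s1 t).p x1) (h2 : 0 < (qX2 s2 t).p x2)
    (k1 : S1 → K) : 0 < alC qS qX1 qX2 k1 (k1 s1) t x1 x2 := by
  unfold alC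
  have hterm : (0:ℝ) < ind (k1 s1 = k1 s1) * (qS.p (s1, s2) *
      ((qX1 s1 t).p x1 * (qX2 s2 t).p x2)) := by
    rw [ind_of rfl, one_mul]; exact mul_pos hqs (mul_pos h1 h2)
  exact lt_of_lt_of_le hterm (Finset.single_le_sum
    (f := fun i : S1 × S2 => ind (k1 i.1 = k1 s1) * (qS.p i * ((qX1 i.1 t).p x1 * (qX2 i.2 t).p x2)))
    (fun i _ => mul_nonneg (ind_nonneg _) (mul_nonneg (qS.nonneg i)
      (mul_nonneg ((qX1 i.1 t).nonneg x1) ((qX2 i.2 t).nonneg x2))))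
    (Finset.mem_univ ((s1, s2) : S1 × S2)))

lemma gamC_pos {s1 : S1} {s2 : S2} {t : T} {x1 : X1} {x2 : X2} {y : Y}
    (hqs : 0 < qS.p (s1, s2)) (h1 : 0 < (qX1 s1 t).p x1) (h2 : 0 < (qX2 s2 t).p x2)
    (hW : 0 < (Wch x1 x2).p y) (k1 : S1 → K) :
    0 < gamC qS qX1 qX2 Wch k1 (k1 s1) t y := by
  unfold gamC
  have hterm : (0:ℝ) < ind (k1 s1 = k1 s1) *
      (qS.p (s1, s2) * qtl qX1 qX2 Wch t y (s1, s2)) := by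
    rw [ind_of rfl, one_mul]; exact mul_pos hqs (qtl_pos qX1 qX2 Wch h1 h2 hW)
  exact lt_of_lt_of_le hterm (Finset.single_le_sum
    (f := fun i : S1 × S2 => ind (k1 i.1 = k1 s1) * (qS.p i * qtl qX1 qX2 Wch t y i))
    (fun i _ => mul_nonneg (ind_nonneg _) (mul_nonneg (qS.nonneg i)
      (qtl_nonneg qX1 qX2 Wch t y i)))
    (Finset.mem_univ ((s1, s2) : S1 × S2)))

lemma alD_pos {s1 : S1} {s2 : S2} {t : T} {x1 : X1} {x2 : X2}
    (hqs : 0 < qS.p (s1, s2)) (hqt : 0 < qT.p t) (h1 : 0 < (qX1 s1 t).p x1)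
    (h2 : 0 < (qX2 s2 t).p x2) : 0 < alD qS qT qX1 qX2 x1 x2 := by
  unfold alD
  have hterm : (0:ℝ) < qS.p (s1, s2) * ∑ t', qT.p t' *
      ((qX1 s1 t').p x1 * (qX2 s2 t').p x2) := by
    refine mul_pos hqs ?_
    exact lt_of_lt_of_le (mul_pos hqt (mul_pos h1 h2)) (Finset.single_le_sum
      (f := fun j => qT.p j * ((qX1 s1 j).p x1 * (qX2 s2 j).p x2))
      (fun j _ => mul_nonneg (qT.nonneg j) (mul_nonneg ((qX1 s1 j).nonneg x1)
        ((qX2 s2 j).nonneg x2))) (Finset.mem_univ t))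
  exact lt_of_lt_of_le hterm (Finset.single_le_sum
    (f := fun i : S1 × S2 => qS.p i * ∑ t', qT.p t' * ((qX1 i.1 t').p x1 * (qX2 i.2 t').p x2))
    (fun i _ => mul_nonneg (qS.nonneg i) (Finset.sum_nonneg fun j _ =>
      mul_nonneg (qT.nonneg j) (mul_nonneg ((qX1 i.1 j).nonneg x1) ((qX2 i.2 j).nonneg x2))))
    (Finset.mem_univ ((s1, s2) : S1 × S2)))

lemma delD_pos {s1 : S1} {s2 : S2} {t : T} {x1 : X1} {x2 : X2} {y : Y}
    (hqs : 0 < qS.p (s1, s2)) (hqt : 0 < qT.p t) (h1 : 0 < (qX1 s1 t).p x1)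
    (h2 : 0 < (qX2 s2 t).p x2) (hW : 0 < (Wch x1 x2).p y) :
    0 < delD qS qT qX1 qX2 Wch y := by
  unfold delD
  have hterm : (0:ℝ) < qS.p (s1, s2) * ∑ t', qT.p t' * qtl qX1 qX2 Wch t' y (s1, s2) := by
    refine mul_pos hqs ?_
    exact lt_of_lt_of_le (mul_pos hqt (qtl_pos qX1 qX2 Wch h1 h2 hW))
      (Finset.single_le_sum (f := fun j => qT.p j * qtl qX1 qX2 Wch j y (s1, s2))
        (fun j _ => mul_nonneg (qT.nonneg j) (qtl_nonneg qX1 qX2 Wch j y (s1, s2)))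
        (Finset.mem_univ t))
  exact lt_of_lt_of_le hterm (Finset.single_le_sum
    (f := fun i : S1 × S2 => qS.p i * ∑ t', qT.p t' * qtl qX1 qX2 Wch t' y i)
    (fun i _ => mul_nonneg (qS.nonneg i) (Finset.sum_nonneg fun j _ =>
      mul_nonneg (qT.nonneg j) (qtl_nonneg qX1 qX2 Wch j y i)))
    (Finset.mem_univ ((s1, s2) : S1 × S2)))

/-! ### The four exponentials, computed on the support -/

lemma powA_eq {s1 : S1} {s2 : S2} {t : T} {x1 : X1} {x2 : X2} {y : Y} (hqs : 0 < qS.p (s1, s2)) (hqt : 0 < qT.p t) (h1 : 0 < (qX1 s1 t).p x1) (h2 : 0 < (qX2 s2 t).p x2) (hW : 0 < (Wch x1 x2).p y) :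
    (2:ℝ) ^ (hS1cS2 qS s1 s2 - iYX1cX2S2T qS qT qX1 qX2 Wch y x1 x2 s2 t)
      = betA qS qX1 Wch s2 t y x2 / (qS.p (s1, s2) * (Wch x1 x2).p y) := by
  have hmg : 0 < mgS2 qS s2 := mgS2_pos qS hqs
  have hβ : 0 < betA qS qX1 Wch s2 t y x2 := betA_pos qS qX1 Wch hqs h1 hW
  have hα : 0 < alA qS qX1 s2 t x1 := alA_pos qS qX1 hqs h1
  have hratio : mYX1X2S2T qS qT qX1 qX2 Wch y x1 x2 s2 t * mX2S2T qS qT qX1 qX2 Wch x2 s2 t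
      / (mYX2S2T qS qT qX1 qX2 Wch y x2 s2 t * mX1X2S2T qS qT qX1 qX2 Wch x1 x2 s2 t)
      = (Wch x1 x2).p y * mgS2 qS s2 / betA qS qX1 Wch s2 t y x2 := by
    rw [mYX1X2S2T_eq, mX2S2T_eq, mYX2S2T_eq, mX1X2S2T_eq]
    rw [div_eq_div_iff (ne_of_gt (mul_pos (mul_pos hqt (mul_pos h2 hβ))
      (mul_pos hqt (mul_pos h2 hα)))) (ne_of_gt hβ)]
    ring
  unfold hS1cS2 iYX1cX2S2T
  rw [hratio]
  rw [show (-Real.logb 2 (qS.p (s1, s2) / mgS2 qS s2)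
      - Real.logb 2 ((Wch x1 x2).p y * mgS2 qS s2 / betA qS qX1 Wch s2 t y x2))
      = Real.logb 2 (betA qS qX1 Wch s2 t y x2 / (qS.p (s1, s2) * (Wch x1 x2).p y)) from ?_]
  · exact Real.rpow_logb two_pos (by norm_num) (div_pos hβ (mul_pos hqs hW))
  · rw [Real.logb_div (ne_of_gt hqs) (ne_of_gt hmg),
      Real.logb_div (ne_of_gt (mul_pos hW hmg)) (ne_of_gt hβ),
      Real.logb_mul (ne_of_gt hW) (ne_of_gt hmg),
      Real.logb_div (ne_of_gt hβ) (ne_of_gt (mul_pos hqs hW)),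
      Real.logb_mul (ne_of_gt hqs) (ne_of_gt hW)]
    ring

lemma powB_eq {s1 : S1} {s2 : S2} {t : T} {x1 : X1} {x2 : X2} {y : Y} (hqs : 0 < qS.p (s1, s2)) (hqt : 0 < qT.p t) (h1 : 0 < (qX1 s1 t).p x1) (h2 : 0 < (qX2 s2 t).p x2) (hW : 0 < (Wch x1 x2).p y) :
    (2:ℝ) ^ (hS2cS1 qS s1 s2 - iYX2cX1S1T qS qT qX1 qX2 Wch y x1 x2 s1 t)
      = betB qS qX2 Wch s1 t y x1 / (qS.p (s1, s2) * (Wch x1 x2).p y) := by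
  have hmg : 0 < mgS1 qS s1 := mgS1_pos qS hqs
  have hβ : 0 < betB qS qX2 Wch s1 t y x1 := betB_pos qS qX2 Wch hqs h2 hW
  have hα : 0 < alB qS qX2 s1 t x2 := alB_pos qS qX2 hqs h2
  have hratio : mYX1X2S1T qS qT qX1 qX2 Wch y x1 x2 s1 t * mX1S1T qS qT qX1 qX2 Wch x1 s1 t
      / (mYX1S1T qS qT qX1 qX2 Wch y x1 s1 t * mX1X2S1T qS qT qX1 qX2 Wch x1 x2 s1 t)
      = (Wch x1 x2).p y * mgS1 qS s1 / betB qS qX2 Wch s1 t y x1 := by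
    rw [mYX1X2S1T_eq, mX1S1T_eq, mYX1S1T_eq, mX1X2S1T_eq]
    rw [div_eq_div_iff (ne_of_gt (mul_pos (mul_pos hqt (mul_pos h1 hβ))
      (mul_pos hqt (mul_pos h1 hα)))) (ne_of_gt hβ)]
    ring
  unfold hS2cS1 iYX2cX1S1T
  rw [hratio]
  rw [show (-Real.logb 2 (qS.p (s1, s2) / mgS1 qS s1)
      - Real.logb 2 ((Wch x1 x2).p y * mgS1 qS s1 / betB qS qX2 Wch s1 t y x1))
      = Real.logb 2 (betB qS qX2 Wch s1 t y x1 / (qS.p (s1, s2) * (Wch x1 x2).p y)) from ?_]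
  · exact Real.rpow_logb two_pos (by norm_num) (div_pos hβ (mul_pos hqs hW))
  · rw [Real.logb_div (ne_of_gt hqs) (ne_of_gt hmg),
      Real.logb_div (ne_of_gt (mul_pos hW hmg)) (ne_of_gt hβ),
      Real.logb_mul (ne_of_gt hW) (ne_of_gt hmg),
      Real.logb_div (ne_of_gt hβ) (ne_of_gt (mul_pos hqs hW)),
      Real.logb_mul (ne_of_gt hqs) (ne_of_gt hW)]
    ring

lemma powC_eq {s1 : S1} {s2 : S2} {t : T} {x1 : X1} {x2 : X2} {y : Y} (hqs : 0 < qS.p (s1, s2)) (hqt : 0 < qT.p t) (h1 : 0 < (qX1 s1 t).p x1) (h2 : 0 < (qX2 s2 t).p x2) (hW : 0 < (Wch x1 x2).p y) (k1 : S1 → K) :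
    (2:ℝ) ^ (hS1S2cK qS k1 s1 s2 - iYX1X2cKT qS qT qX1 qX2 Wch k1 y x1 x2 (k1 s1) t)
      = gamC qS qX1 qX2 Wch k1 (k1 s1) t y / (qS.p (s1, s2) * (Wch x1 x2).p y) := by
  have hmg : 0 < mgK qS k1 (k1 s1) := mgK_pos qS hqs k1
  have hγ : 0 < gamC qS qX1 qX2 Wch k1 (k1 s1) t y := gamC_pos qS qX1 qX2 Wch hqs h1 h2 hW k1
  have hα : 0 < alC qS qX1 qX2 k1 (k1 s1) t x1 x2 := alC_pos qS qX1 qX2 hqs h1 h2 k1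
  have hratio : mYX1X2KT qS qT qX1 qX2 Wch k1 y x1 x2 (k1 s1) t * mKT qS qT qX1 qX2 Wch k1 (k1 s1) t
      / (mYKT qS qT qX1 qX2 Wch k1 y (k1 s1) t * mX1X2KT qS qT qX1 qX2 Wch k1 x1 x2 (k1 s1) t)
      = (Wch x1 x2).p y * mgK qS k1 (k1 s1) / gamC qS qX1 qX2 Wch k1 (k1 s1) t y := by
    rw [mYX1X2KT_eq, mKT_eq, mYKT_eq, mX1X2KT_eq]
    rw [div_eq_div_iff (ne_of_gt (mul_pos (mul_pos hqt hγ) (mul_pos hqt hα)))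
      (ne_of_gt hγ)]
    ring
  unfold hS1S2cK iYX1X2cKT
  rw [hratio]
  rw [show (-Real.logb 2 (qS.p (s1, s2) / mgK qS k1 (k1 s1))
      - Real.logb 2 ((Wch x1 x2).p y * mgK qS k1 (k1 s1) / gamC qS qX1 qX2 Wch k1 (k1 s1) t y))
      = Real.logb 2 (gamC qS qX1 qX2 Wch k1 (k1 s1) t y / (qS.p (s1, s2) * (Wch x1 x2).p y)) from ?_]
  · exact Real.rpow_logb two_pos (by norm_num) (div_pos hγ (mul_pos hqs hW))
  · rw [Real.logb_div (ne_of_gt hqs) (ne_of_gt hmg),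
      Real.logb_div (ne_of_gt (mul_pos hW hmg)) (ne_of_gt hγ),
      Real.logb_mul (ne_of_gt hW) (ne_of_gt hmg),
      Real.logb_div (ne_of_gt hγ) (ne_of_gt (mul_pos hqs hW)),
      Real.logb_mul (ne_of_gt hqs) (ne_of_gt hW)]
    ring

lemma powD_eq {s1 : S1} {s2 : S2} {t : T} {x1 : X1} {x2 : X2} {y : Y} (hqs : 0 < qS.p (s1, s2)) (hqt : 0 < qT.p t) (h1 : 0 < (qX1 s1 t).p x1) (h2 : 0 < (qX2 s2 t).p x2) (hW : 0 < (Wch x1 x2).p y) :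
    (2:ℝ) ^ (hS1S2 qS s1 s2 - iYX1X2 qS qT qX1 qX2 Wch y x1 x2)
      = delD qS qT qX1 qX2 Wch y / (qS.p (s1, s2) * (Wch x1 x2).p y) := by
  have hδ : 0 < delD qS qT qX1 qX2 Wch y := delD_pos qS qT qX1 qX2 Wch hqs hqt h1 h2 hW
  have hα : 0 < alD qS qT qX1 qX2 x1 x2 := alD_pos qS qT qX1 qX2 hqs hqt h1 h2
  have hratio : mYX1X2 qS qT qX1 qX2 Wch y x1 x2
      / (mX1X2 qS qT qX1 qX2 Wch x1 x2 * mY qS qT qX1 qX2 Wch y)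
      = (Wch x1 x2).p y / delD qS qT qX1 qX2 Wch y := by
    rw [mYX1X2_eq, mX1X2_eq, mY_eq]
    rw [div_eq_div_iff (ne_of_gt (mul_pos hα hδ)) (ne_of_gt hδ)]
    ring
  unfold hS1S2 iYX1X2
  rw [hratio]
  rw [show (-Real.logb 2 (qS.p (s1, s2))
      - Real.logb 2 ((Wch x1 x2).p y / delD qS qT qX1 qX2 Wch y))
      = Real.logb 2 (delD qS qT qX1 qX2 Wch y / (qS.p (s1, s2) * (Wch x1 x2).p y)) from ?_]
  · exact Real.rpow_logb two_pos (by norm_num) (div_pos hδ (mul_pos hqs hW))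
  · rw [Real.logb_div (ne_of_gt hW) (ne_of_gt hδ),
      Real.logb_div (ne_of_gt hδ) (ne_of_gt (mul_pos hqs hW)),
      Real.logb_mul (ne_of_gt hqs) (ne_of_gt hW)]
    ring

/-- The key identity: on the support, the reciprocal of the CES denominator is
`Z / (Z + betA + betB + gamC + delD)` with `Z = q(s)W(y|x)`. -/
lemma inv_sum_eq {s1 : S1} {s2 : S2} {t : T} {x1 : X1} {x2 : X2} {y : Y} (hqs : 0 < qS.p (s1, s2)) (hqt : 0 < qT.p t) (h1 : 0 < (qX1 s1 t).p x1) (h2 : 0 < (qX2 s2 t).p x2) (hW : 0 < (Wch x1 x2).p y) (k1 : S1 → K) :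
    (1 + (2:ℝ) ^ (hS1cS2 qS s1 s2 - iYX1cX2S2T qS qT qX1 qX2 Wch y x1 x2 s2 t)
       + (2:ℝ) ^ (hS2cS1 qS s1 s2 - iYX2cX1S1T qS qT qX1 qX2 Wch y x1 x2 s1 t)
       + (2:ℝ) ^ (hS1S2cK qS k1 s1 s2 - iYX1X2cKT qS qT qX1 qX2 Wch k1 y x1 x2 (k1 s1) t)
       + (2:ℝ) ^ (hS1S2 qS s1 s2 - iYX1X2 qS qT qX1 qX2 Wch y x1 x2))⁻¹
    = (qS.p (s1, s2) * (Wch x1 x2).p y) /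
        (qS.p (s1, s2) * (Wch x1 x2).p y +
          (betA qS qX1 Wch s2 t y x2 + betB qS qX2 Wch s1 t y x1 +
            gamC qS qX1 qX2 Wch k1 (k1 s1) t y + delD qS qT qX1 qX2 Wch y)) := by
  rw [powA_eq qS qT qX1 qX2 Wch hqs hqt h1 h2 hW, powB_eq qS qT qX1 qX2 Wch hqs hqt h1 h2 hW,
    powC_eq qS qT qX1 qX2 Wch hqs hqt h1 h2 hW k1, powD_eq qS qT qX1 qX2 Wch hqs hqt h1 h2 hW]
  have hZ : 0 < qS.p (s1, s2) * (Wch x1 x2).p y := mul_pos hqs hW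
  rw [show (1 + betA qS qX1 Wch s2 t y x2 / (qS.p (s1, s2) * (Wch x1 x2).p y)
      + betB qS qX2 Wch s1 t y x1 / (qS.p (s1, s2) * (Wch x1 x2).p y)
      + gamC qS qX1 qX2 Wch k1 (k1 s1) t y / (qS.p (s1, s2) * (Wch x1 x2).p y)
      + delD qS qT qX1 qX2 Wch y / (qS.p (s1, s2) * (Wch x1 x2).p y))
      = (qS.p (s1, s2) * (Wch x1 x2).p y +
          (betA qS qX1 Wch s2 t y x2 + betB qS qX2 Wch s1 t y x1 +
            gamC qS qX1 qX2 Wch k1 (k1 s1) t y + delD qS qT qX1 qX2 Wch y)) /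
          (qS.p (s1, s2) * (Wch x1 x2).p y) from by
    field_simp
    ring]
  rw [inv_div]

end Pos

section CS

/-- Jensen-type bound via Cauchy–Schwarz. -/
lemma cs_bound {ι : Type*} [Fintype ι] (w J : ι → ℝ) (Z Sb : ℝ) (hZ : 0 < Z)
    (hw : ∀ i, 0 ≤ w i) (hJ : ∀ i, 0 ≤ J i) (hSb : 0 ≤ Sb)
    (hJb : ∑ i, w i * J i ≤ (∑ i, w i) * Sb) :
    (∑ i, w i) * (Z ^ 2 / (Z + Sb)) ≤ ∑ i, w i * (Z ^ 2 / (Z + J i)) := by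
  have hZJ : ∀ i, 0 < Z + J i := fun i => add_pos_of_pos_of_nonneg hZ (hJ i)
  have hRHSnn : 0 ≤ ∑ i, w i * (Z ^ 2 / (Z + J i)) :=
    Finset.sum_nonneg fun i _ => mul_nonneg (hw i)
      (div_nonneg (sq_nonneg Z) (hZJ i).le)
  have hWt0 : 0 ≤ ∑ i, w i := Finset.sum_nonneg fun i _ => hw i
  rcases eq_or_lt_of_le hWt0 with h0 | hpos
  · rw [← h0, zero_mul]
    exact hRHSnn
  · set Wt := ∑ i, w i with hWtdef
    have hD : ∑ i, w i * (Z + J i) ≤ Wt * (Z + Sb) := by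
      have e1 : ∑ i, w i * (Z + J i) = Wt * Z + ∑ i, w i * J i := by
        rw [Finset.sum_congr rfl (fun i _ => mul_add (w i) Z (J i)),
          Finset.sum_add_distrib, ← Finset.sum_mul]
      rw [e1]
      have := hJb
      nlinarith [this]
    have hDpos : 0 < ∑ i, w i * (Z + J i) := by
      have : Wt * Z ≤ ∑ i, w i * (Z + J i) := by
        rw [Finset.sum_mul]
        exact Finset.sum_le_sum fun i _ =>
          mul_le_mul_of_nonneg_left (le_add_of_nonneg_right (hJ i)) (hw i)
      exact lt_of_lt_of_le (mul_pos hpos hZ) this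
    have hcs : Wt ^ 2 ≤ (∑ i, w i * (Z + J i)) * (∑ i, w i / (Z + J i)) := by
      have hkey : ∀ i, Real.sqrt (w i * (Z + J i)) * Real.sqrt (w i / (Z + J i)) = w i := by
        intro i
        rw [← Real.sqrt_mul (mul_nonneg (hw i) (hZJ i).le)]
        rw [show w i * (Z + J i) * (w i / (Z + J i)) = w i * w i from by
          have hne := ne_of_gt (hZJ i)
          field_simp]
        exact Real.sqrt_mul_self (hw i)
      have hcs0 := Finset.sum_mul_sq_le_sq_mul_sq Finset.univ
        (fun i => Real.sqrt (w i * (Z + J i))) (fun i => Real.sqrt (w i / (Z + J i)))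
      rw [Finset.sum_congr rfl (fun i _ => hkey i)] at hcs0
      rw [Finset.sum_congr rfl (fun i _ =>
          Real.sq_sqrt (mul_nonneg (hw i) (hZJ i).le)),
        Finset.sum_congr rfl (fun i _ =>
          Real.sq_sqrt (div_nonneg (hw i) (hZJ i).le))] at hcs0
      exact hcs0
    have hS : Wt / (Z + Sb) ≤ ∑ i, w i / (Z + J i) := by
      have h1 : Wt ^ 2 / (∑ i, w i * (Z + J i)) ≤ ∑ i, w i / (Z + J i) :=
        (div_le_iff₀ hDpos).mpr (by rw [mul_comm] at hcs; exact hcs)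
      have h2 : Wt ^ 2 / (Wt * (Z + Sb)) ≤ Wt ^ 2 / (∑ i, w i * (Z + J i)) :=
        div_le_div_of_nonneg_left (sq_nonneg Wt) hDpos hD
      have h3 : Wt ^ 2 / (Wt * (Z + Sb)) = Wt / (Z + Sb) := by
        rw [pow_two, mul_div_mul_left _ _ (ne_of_gt hpos)]
      rw [h3] at h2
      exact le_trans h2 h1
    have e2 : ∑ i, w i * (Z ^ 2 / (Z + J i)) = Z ^ 2 * ∑ i, w i / (Z + J i) := by
      rw [Finset.mul_sum]
      exact Finset.sum_congr rfl fun i _ => by rw [mul_div_assoc', mul_comm (w i) _, mul_div_assoc]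
    rw [e2, show Wt * (Z ^ 2 / (Z + Sb)) = Z ^ 2 * (Wt / (Z + Sb)) from by ring]
    exact mul_le_mul_of_nonneg_left hS (sq_nonneg Z)

end CS

section SchemeDefs

variable {S1 S2 K T X1 X2 Y : Type}
  [Fintype S1] [Fintype S2] [Fintype K] [Fintype T]
  [Fintype X1] [Fintype X2] [Fintype Y]
  [DecidableEq S1] [DecidableEq S2] [DecidableEq K] [DecidableEq T]

/-- A codebook: a map generating the common `T`, and encoder tables. -/
@[reducible] def CB (S1 S2 K T X1 X2 : Type) : Type :=
  (K → T) × (S1 × T → X1) × (S2 × T → X2)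

variable (qS : FinPMF (S1 × S2)) (qT : FinPMF T)
  (qX1 : S1 → T → FinPMF X1) (qX2 : S2 → T → FinPMF X2) (Wch : X1 → X2 → FinPMF Y)
  (k1 : S1 → K) (k2 : S2 → K)

noncomputable def PT (τ : K → T) : ℝ := ∏ k, qT.p (τ k)

noncomputable def PF1 (f1 : S1 × T → X1) : ℝ := ∏ a, (qX1 a.1 a.2).p (f1 a)

noncomputable def PF2 (f2 : S2 × T → X2) : ℝ := ∏ a, (qX2 a.1 a.2).p (f2 a)

noncomputable def Pw (ω : CB S1 S2 K T X1 X2) : ℝ :=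
  PT qT ω.1 * (PF1 qX1 ω.2.1 * PF2 qX2 ω.2.2)

lemma PT_nonneg (τ : K → T) : 0 ≤ PT qT τ :=
  Finset.prod_nonneg fun k _ => qT.nonneg (τ k)

lemma PF1_nonneg (f1 : S1 × T → X1) : 0 ≤ PF1 qX1 f1 :=
  Finset.prod_nonneg fun a _ => (qX1 a.1 a.2).nonneg (f1 a)

lemma PF2_nonneg (f2 : S2 × T → X2) : 0 ≤ PF2 qX2 f2 :=
  Finset.prod_nonneg fun a _ => (qX2 a.1 a.2).nonneg (f2 a)

lemma Pw_nonneg (ω : CB S1 S2 K T X1 X2) : 0 ≤ Pw qT qX1 qX2 ω :=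
  mul_nonneg (PT_nonneg qT ω.1) (mul_nonneg (PF1_nonneg qX1 ω.2.1) (PF2_nonneg qX2 ω.2.2))

/-- Decoder score of candidate `sh` given `y`. -/
noncomputable def gw (ω : CB S1 S2 K T X1 X2) (y : Y) (sh : S1 × S2) : ℝ :=
  qS.p sh * (Wch (ω.2.1 (sh.1, ω.1 (k1 sh.1))) (ω.2.2 (sh.2, ω.1 (k1 sh.1)))).p y

noncomputable def Gw (ω : CB S1 S2 K T X1 X2) (y : Y) : ℝ :=
  ∑ sh, gw qS Wch k1 ω y sh

noncomputable def Jw (ω : CB S1 S2 K T X1 X2) (y : Y) (s : S1 × S2) : ℝ :=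
  ∑ sh ∈ Finset.univ.erase s, gw qS Wch k1 ω y sh

lemma gw_nonneg (ω : CB S1 S2 K T X1 X2) (y : Y) (sh : S1 × S2) :
    0 ≤ gw qS Wch k1 ω y sh :=
  mul_nonneg (qS.nonneg sh) ((Wch _ _).nonneg y)

lemma Jw_nonneg (ω : CB S1 S2 K T X1 X2) (y : Y) (s : S1 × S2) :
    0 ≤ Jw qS Wch k1 ω y s :=
  Finset.sum_nonneg fun sh _ => gw_nonneg qS Wch k1 ω y sh

lemma Gw_eq (ω : CB S1 S2 K T X1 X2) (y : Y) (s : S1 × S2) :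
    Gw qS Wch k1 ω y = gw qS Wch k1 ω y s + Jw qS Wch k1 ω y s := by
  unfold Gw Jw
  rw [← Finset.add_sum_erase Finset.univ _ (Finset.mem_univ s)]

/-- The stochastic likelihood decoder. -/
noncomputable def decW (ω : CB S1 S2 K T X1 X2) (y : Y) : FinPMF (S1 × S2) :=
  if h : 0 < Gw qS Wch k1 ω y then
    ⟨fun sh => gw qS Wch k1 ω y sh / Gw qS Wch k1 ω y,
     fun sh => div_nonneg (gw_nonneg qS Wch k1 ω y sh) h.le,
     by rw [← Finset.sum_div]; exact div_self (ne_of_gt h)⟩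
  else qS

/-- Deterministic encoders induced by the codebook. -/
noncomputable def encW1 (τ : K → T) (f1 : S1 × T → X1) (s1 : S1) : FinPMF X1 :=
  ⟨fun x => ind (x = f1 (s1, τ (k1 s1))), fun _ => ind_nonneg _, sum_ind_eq _⟩

noncomputable def encW2 (τ : K → T) (f2 : S2 × T → X2) (s2 : S2) : FinPMF X2 :=
  ⟨fun x => ind (x = f2 (s2, τ (k2 s2))), fun _ => ind_nonneg _, sum_ind_eq _⟩

/-- Probability of correct decoding of the codebook scheme, in collapsed form. -/
noncomputable def pcW (ω : CB S1 S2 K T X1 X2) : ℝ :=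
  ∑ s : S1 × S2, ∑ y : Y, qS.p s *
    ((Wch (ω.2.1 (s.1, ω.1 (k1 s.1))) (ω.2.2 (s.2, ω.1 (k2 s.2)))).p y *
      (decW qS Wch k1 ω y).p s)

lemma pCorrect_eq (ω : CB S1 S2 K T X1 X2) :
    pCorrectMAC qS Wch (encW1 k1 ω.1 ω.2.1) (encW2 k2 ω.1 ω.2.2) (decW qS Wch k1 ω)
      = pcW qS Wch k1 k2 ω := by
  unfold pCorrectMAC pcW encW1 encW2
  rw [Fintype.sum_prod_type]
  refine Finset.sum_congr rfl fun s1 _ => Finset.sum_congr rfl fun s2 _ => ?_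
  have h1 : ∀ x1 : X1, ∀ x2 : X2, ∀ y : Y,
      qS.p (s1, s2) * ind (x1 = ω.2.1 (s1, ω.1 (k1 s1))) * ind (x2 = ω.2.2 (s2, ω.1 (k2 s2))) *
        (Wch x1 x2).p y * (decW qS Wch k1 ω y).p (s1, s2)
      = ind (x1 = ω.2.1 (s1, ω.1 (k1 s1))) * (ind (x2 = ω.2.2 (s2, ω.1 (k2 s2))) *
          (qS.p (s1, s2) * ((Wch x1 x2).p y * (decW qS Wch k1 ω y).p (s1, s2)))) :=
    fun x1 x2 y => by ring
  rw [Finset.sum_congr rfl fun x1 _ => Finset.sum_congr rfl fun x2 _ =>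
    Finset.sum_congr rfl fun y _ => h1 x1 x2 y]
  have h2 : ∀ x1 : X1,
      (∑ x2 : X2, ∑ y : Y, ind (x1 = ω.2.1 (s1, ω.1 (k1 s1))) *
        (ind (x2 = ω.2.2 (s2, ω.1 (k2 s2))) *
          (qS.p (s1, s2) * ((Wch x1 x2).p y * (decW qS Wch k1 ω y).p (s1, s2)))))
      = ind (x1 = ω.2.1 (s1, ω.1 (k1 s1))) *
          ∑ x2 : X2, ∑ y : Y, ind (x2 = ω.2.2 (s2, ω.1 (k2 s2))) *
            (qS.p (s1, s2) * ((Wch x1 x2).p y * (decW qS Wch k1 ω y).p (s1, s2))) := by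
    intro x1
    rw [Finset.mul_sum]
    exact Finset.sum_congr rfl fun x2 _ => by rw [Finset.mul_sum]
  rw [Finset.sum_congr rfl fun x1 _ => h2 x1, sum_ind_mul]
  have h3 : ∀ x2 : X2,
      (∑ y : Y, ind (x2 = ω.2.2 (s2, ω.1 (k2 s2))) *
        (qS.p (s1, s2) * ((Wch (ω.2.1 (s1, ω.1 (k1 s1))) x2).p y *
          (decW qS Wch k1 ω y).p (s1, s2))))
      = ind (x2 = ω.2.2 (s2, ω.1 (k2 s2))) *
          ∑ y : Y, qS.p (s1, s2) * ((Wch (ω.2.1 (s1, ω.1 (k1 s1))) x2).p y *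
            (decW qS Wch k1 ω y).p (s1, s2)) := fun x2 => by rw [Finset.mul_sum]
  rw [Finset.sum_congr rfl fun x2 _ => h3 x2, sum_ind_mul]

end SchemeDefs

section Interference

variable {S1 S2 K T X1 X2 Y : Type}
  [Fintype S1] [Fintype S2] [Fintype K] [Fintype T]
  [Fintype X1] [Fintype X2] [Fintype Y]
  [DecidableEq S1] [DecidableEq S2] [DecidableEq K] [DecidableEq T]

variable (qS : FinPMF (S1 × S2)) (qT : FinPMF T)
  (qX1 : S1 → T → FinPMF X1) (qX2 : S2 → T → FinPMF X2) (Wch : X1 → X2 → FinPMF Y)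
  (k1 : S1 → K)

lemma sum_CB (F : CB S1 S2 K T X1 X2 → ℝ) :
    ∑ ω : CB S1 S2 K T X1 X2, F ω
      = ∑ τ : K → T, ∑ f1 : S1 × T → X1, ∑ f2 : S2 × T → X2, F (τ, f1, f2) := by
  rw [Fintype.sum_prod_type]
  exact Finset.sum_congr rfl fun τ _ => Fintype.sum_prod_type _

/-- The indicator that codebook `ω` reveals `(t, x1, x2)` at the true source pair `s`. -/
noncomputable def chi (s : S1 × S2) (t : T) (x1 : X1) (x2 : X2)
    (ω : CB S1 S2 K T X1 X2) : ℝ :=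
  ind (ω.1 (k1 s.1) = t) * (ind (ω.2.1 (s.1, t) = x1) * ind (ω.2.2 (s.2, t) = x2))

lemma chi_nonneg (s : S1 × S2) (t : T) (x1 : X1) (x2 : X2) (ω : CB S1 S2 K T X1 X2) :
    0 ≤ chi k1 s t x1 x2 ω :=
  mul_nonneg (ind_nonneg _) (mul_nonneg (ind_nonneg _) (ind_nonneg _))

variable (s : S1 × S2) (t : T) (x1 : X1) (x2 : X2) (y : Y)

/-- Interference contribution of candidate `sh`. -/
noncomputable def Vc (sh : S1 × S2) : ℝ :=
  ∑ ω : CB S1 S2 K T X1 X2,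
    chi k1 s t x1 x2 ω * Pw qT qX1 qX2 ω * gw qS Wch k1 ω y sh

/-- Mass of the reveal class. -/
lemma chi_mass :
    ∑ ω : CB S1 S2 K T X1 X2, chi k1 s t x1 x2 ω * Pw qT qX1 qX2 ω
      = qT.p t * ((qX1 s.1 t).p x1 * (qX2 s.2 t).p x2) := by
  unfold chi Pw PT PF1 PF2
  rw [sum_CB]
  have e0 : ∀ τ : K → T, ∀ f1 : S1 × T → X1, ∀ f2 : S2 × T → X2,
      (ind ((τ, f1, f2).1 (k1 s.1) = t) * (ind ((τ, f1, f2).2.1 (s.1, t) = x1) *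
          ind ((τ, f1, f2).2.2 (s.2, t) = x2))) *
        ((∏ k, qT.p ((τ, f1, f2).1 k)) * ((∏ a, (qX1 a.1 a.2).p ((τ, f1, f2).2.1 a)) *
          (∏ a, (qX2 a.1 a.2).p ((τ, f1, f2).2.2 a))))
      = ((∏ k, qT.p (τ k)) * ind (τ (k1 s.1) = t)) *
          (((∏ a, (qX1 a.1 a.2).p (f1 a)) * ind (f1 (s.1, t) = x1)) *
            ((∏ a, (qX2 a.1 a.2).p (f2 a)) * ind (f2 (s.2, t) = x2))) := by
    intro τ f1 f2
    dsimp only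
    ring
  rw [Finset.sum_congr rfl fun τ _ => Finset.sum_congr rfl fun f1 _ =>
    Finset.sum_congr rfl fun f2 _ => e0 τ f1 f2]
  have e1 : ∀ τ : K → T, ∀ f1 : S1 × T → X1,
      (∑ f2 : S2 × T → X2, ((∏ k, qT.p (τ k)) * ind (τ (k1 s.1) = t)) *
        (((∏ a, (qX1 a.1 a.2).p (f1 a)) * ind (f1 (s.1, t) = x1)) *
          ((∏ a, (qX2 a.1 a.2).p (f2 a)) * ind (f2 (s.2, t) = x2))))
      = ((∏ k, qT.p (τ k)) * ind (τ (k1 s.1) = t)) *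
          (((∏ a, (qX1 a.1 a.2).p (f1 a)) * ind (f1 (s.1, t) = x1)) *
            (qX2 s.2 t).p x2) := by
    intro τ f1
    simp only [← Finset.mul_sum]
    rw [sum_pi_pin (fun (a : S2 × T) b => (qX2 a.1 a.2).p b)
      (fun a => (qX2 a.1 a.2).sum_eq_one) (s.2, t) x2]
  rw [Finset.sum_congr rfl fun τ _ => Finset.sum_congr rfl fun f1 _ => e1 τ f1]
  have e2 : ∀ τ : K → T,
      (∑ f1 : S1 × T → X1, ((∏ k, qT.p (τ k)) * ind (τ (k1 s.1) = t)) *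
        (((∏ a, (qX1 a.1 a.2).p (f1 a)) * ind (f1 (s.1, t) = x1)) * (qX2 s.2 t).p x2))
      = ((∏ k, qT.p (τ k)) * ind (τ (k1 s.1) = t)) *
          ((qX1 s.1 t).p x1 * (qX2 s.2 t).p x2) := by
    intro τ
    have : ∀ f1 : S1 × T → X1,
        ((∏ k, qT.p (τ k)) * ind (τ (k1 s.1) = t)) *
          (((∏ a, (qX1 a.1 a.2).p (f1 a)) * ind (f1 (s.1, t) = x1)) * (qX2 s.2 t).p x2)
        = ((∏ k, qT.p (τ k)) * ind (τ (k1 s.1) = t) * (qX2 s.2 t).p x2) *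
            ((∏ a, (qX1 a.1 a.2).p (f1 a)) * ind (f1 (s.1, t) = x1)) := fun f1 => by ring
    rw [Finset.sum_congr rfl fun f1 _ => this f1, ← Finset.mul_sum,
      sum_pi_pin (fun (a : S1 × T) b => (qX1 a.1 a.2).p b)
        (fun a => (qX1 a.1 a.2).sum_eq_one) (s.1, t) x1]
    ring
  rw [Finset.sum_congr rfl fun τ _ => e2 τ]
  have e3 : ∀ τ : K → T,
      ((∏ k, qT.p (τ k)) * ind (τ (k1 s.1) = t)) * ((qX1 s.1 t).p x1 * (qX2 s.2 t).p x2)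
      = ((qX1 s.1 t).p x1 * (qX2 s.2 t).p x2) *
          ((∏ k, qT.p (τ k)) * ind (τ (k1 s.1) = t)) := fun τ => by ring
  rw [Finset.sum_congr rfl fun τ _ => e3 τ, ← Finset.mul_sum,
    sum_pi_pin (fun (_ : K) t' => qT.p t') (fun _ => qT.sum_eq_one) (k1 s.1) t]
  ring

end Interference

section VLemmas

variable {S1 S2 K T X1 X2 Y : Type}
  [Fintype S1] [Fintype S2] [Fintype K] [Fintype T]
  [Fintype X1] [Fintype X2] [Fintype Y]
  [DecidableEq S1] [DecidableEq S2] [DecidableEq K] [DecidableEq T]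

variable (qS : FinPMF (S1 × S2)) (qT : FinPMF T)
  (qX1 : S1 → T → FinPMF X1) (qX2 : S2 → T → FinPMF X2) (Wch : X1 → X2 → FinPMF Y)
  (k1 : S1 → K)

variable (s : S1 × S2) (t : T) (x1 : X1) (x2 : X2) (y : Y)

/-- Inner double sum over encoder tables, both candidate coordinates fresh. -/
lemma inner_fresh (sh : S1 × S2) (hs1 : sh.1 ≠ s.1) (hs2 : sh.2 ≠ s.2) (th : T) :
    (∑ f1 : S1 × T → X1,
      (∏ a, (qX1 a.1 a.2).p (f1 a)) * (ind (f1 (s.1, t) = x1) *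
        ∑ f2 : S2 × T → X2, (∏ a, (qX2 a.1 a.2).p (f2 a)) * (ind (f2 (s.2, t) = x2) *
          (Wch (f1 (sh.1, th)) (f2 (sh.2, th))).p y)))
    = (qX1 s.1 t).p x1 * ((qX2 s.2 t).p x2 * qtl qX1 qX2 Wch th y sh) := by
  have hne2 : ((s.2, t) : S2 × T) ≠ (sh.2, th) :=
    fun hp => hs2 (congrArg Prod.fst hp).symm
  have hne1 : ((s.1, t) : S1 × T) ≠ (sh.1, th) :=
    fun hp => hs1 (congrArg Prod.fst hp).symm
  have hf2 : ∀ f1 : S1 × T → X1,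
      (∑ f2 : S2 × T → X2, (∏ a, (qX2 a.1 a.2).p (f2 a)) * (ind (f2 (s.2, t) = x2) *
        (Wch (f1 (sh.1, th)) (f2 (sh.2, th))).p y))
      = (qX2 s.2 t).p x2 * qb2 qX2 Wch th y (f1 (sh.1, th)) sh.2 := by
    intro f1
    rw [sum_pi_pin_eval (fun (a : S2 × T) b => (qX2 a.1 a.2).p b)
      (fun a => (qX2 a.1 a.2).sum_eq_one) hne2 x2
      (fun b => (Wch (f1 (sh.1, th)) b).p y)]
    rfl
  rw [Finset.sum_congr rfl fun f1 _ =>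
    congrArg (fun z => (∏ a, (qX1 a.1 a.2).p (f1 a)) * (ind (f1 (s.1, t) = x1) * z))
      (hf2 f1)]
  rw [sum_pi_pin_eval (fun (a : S1 × T) b => (qX1 a.1 a.2).p b)
    (fun a => (qX1 a.1 a.2).sum_eq_one) hne1 x1
    (fun c => (qX2 s.2 t).p x2 * qb2 qX2 Wch th y c sh.2)]
  rw [show (∑ b, (qX1 sh.1 th).p b * ((qX2 s.2 t).p x2 * qb2 qX2 Wch th y b sh.2))
      = (qX2 s.2 t).p x2 * qtl qX1 qX2 Wch th y sh from by
    unfold qtl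
    rw [Finset.mul_sum]
    exact Finset.sum_congr rfl fun b _ => by ring]

/-- Inner double sum, candidate `(sh1, s.2)`: second coordinate pinned. -/
lemma inner_one (sh1 : S1) (hs1 : sh1 ≠ s.1) :
    (∑ f1 : S1 × T → X1,
      (∏ a, (qX1 a.1 a.2).p (f1 a)) * (ind (f1 (s.1, t) = x1) *
        ∑ f2 : S2 × T → X2, (∏ a, (qX2 a.1 a.2).p (f2 a)) * (ind (f2 (s.2, t) = x2) *
          (Wch (f1 (sh1, t)) (f2 (s.2, t))).p y)))
    = (qX1 s.1 t).p x1 * ((qX2 s.2 t).p x2 * qb1 qX1 Wch t y x2 sh1) := by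
  have hne1 : ((s.1, t) : S1 × T) ≠ (sh1, t) :=
    fun hp => hs1 (congrArg Prod.fst hp).symm
  have hf2 : ∀ f1 : S1 × T → X1,
      (∑ f2 : S2 × T → X2, (∏ a, (qX2 a.1 a.2).p (f2 a)) * (ind (f2 (s.2, t) = x2) *
        (Wch (f1 (sh1, t)) (f2 (s.2, t))).p y))
      = (qX2 s.2 t).p x2 * (Wch (f1 (sh1, t)) x2).p y := by
    intro f1
    rw [sum_pi_pin_eval_same (fun (a : S2 × T) b => (qX2 a.1 a.2).p b)
      (fun a => (qX2 a.1 a.2).sum_eq_one) (s.2, t) x2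
      (fun b => (Wch (f1 (sh1, t)) b).p y)]
  rw [Finset.sum_congr rfl fun f1 _ =>
    congrArg (fun z => (∏ a, (qX1 a.1 a.2).p (f1 a)) * (ind (f1 (s.1, t) = x1) * z))
      (hf2 f1)]
  rw [sum_pi_pin_eval (fun (a : S1 × T) b => (qX1 a.1 a.2).p b)
    (fun a => (qX1 a.1 a.2).sum_eq_one) hne1 x1
    (fun c => (qX2 s.2 t).p x2 * (Wch c x2).p y)]
  rw [show (∑ b, (qX1 sh1 t).p b * ((qX2 s.2 t).p x2 * (Wch b x2).p y))
      = (qX2 s.2 t).p x2 * qb1 qX1 Wch t y x2 sh1 from by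
    unfold qb1
    rw [Finset.mul_sum]
    exact Finset.sum_congr rfl fun b _ => by ring]

/-- Inner double sum, candidate `(s.1, sh2)`: first coordinate pinned. -/
lemma inner_two (sh2 : S2) (hs2 : sh2 ≠ s.2) :
    (∑ f1 : S1 × T → X1,
      (∏ a, (qX1 a.1 a.2).p (f1 a)) * (ind (f1 (s.1, t) = x1) *
        ∑ f2 : S2 × T → X2, (∏ a, (qX2 a.1 a.2).p (f2 a)) * (ind (f2 (s.2, t) = x2) *
          (Wch (f1 (s.1, t)) (f2 (sh2, t))).p y)))
    = (qX1 s.1 t).p x1 * ((qX2 s.2 t).p x2 * qb2 qX2 Wch t y x1 sh2) := by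
  have hne2 : ((s.2, t) : S2 × T) ≠ (sh2, t) :=
    fun hp => hs2 (congrArg Prod.fst hp).symm
  have hf2 : ∀ f1 : S1 × T → X1,
      (∑ f2 : S2 × T → X2, (∏ a, (qX2 a.1 a.2).p (f2 a)) * (ind (f2 (s.2, t) = x2) *
        (Wch (f1 (s.1, t)) (f2 (sh2, t))).p y))
      = (qX2 s.2 t).p x2 * qb2 qX2 Wch t y (f1 (s.1, t)) sh2 := by
    intro f1
    rw [sum_pi_pin_eval (fun (a : S2 × T) b => (qX2 a.1 a.2).p b)
      (fun a => (qX2 a.1 a.2).sum_eq_one) hne2 x2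
      (fun b => (Wch (f1 (s.1, t)) b).p y)]
    rfl
  rw [Finset.sum_congr rfl fun f1 _ =>
    congrArg (fun z => (∏ a, (qX1 a.1 a.2).p (f1 a)) * (ind (f1 (s.1, t) = x1) * z))
      (hf2 f1)]
  rw [sum_pi_pin_eval_same (fun (a : S1 × T) b => (qX1 a.1 a.2).p b)
    (fun a => (qX1 a.1 a.2).sum_eq_one) (s.1, t) x1
    (fun c => (qX2 s.2 t).p x2 * qb2 qX2 Wch t y c sh2)]

end VLemmas

section VClass

variable {S1 S2 K T X1 X2 Y : Type}
  [Fintype S1] [Fintype S2] [Fintype K] [Fintype T]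
  [Fintype X1] [Fintype X2] [Fintype Y]
  [DecidableEq S1] [DecidableEq S2] [DecidableEq K] [DecidableEq T]

variable (qS : FinPMF (S1 × S2)) (qT : FinPMF T)
  (qX1 : S1 → T → FinPMF X1) (qX2 : S2 → T → FinPMF X2) (Wch : X1 → X2 → FinPMF Y)
  (k1 : S1 → K)

variable (s : S1 × S2) (t : T) (x1 : X1) (x2 : X2) (y : Y)

lemma VE1 (sh1 : S1) (hs1 : sh1 ≠ s.1) (hkk : k1 sh1 = k1 s.1) :
    Vc qS qT qX1 qX2 Wch k1 s t x1 x2 y (sh1, s.2)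
      = (qT.p t * ((qX1 s.1 t).p x1 * (qX2 s.2 t).p x2)) *
          (qS.p (sh1, s.2) * qb1 qX1 Wch t y x2 sh1) := by
  unfold Vc chi Pw PT PF1 PF2 gw
  rw [sum_CB]
  dsimp only
  rw [hkk]
  have e0 : ∀ τ : K → T, ∀ f1 : S1 × T → X1, ∀ f2 : S2 × T → X2,
      ind (τ (k1 s.1) = t) * (ind (f1 (s.1, t) = x1) * ind (f2 (s.2, t) = x2)) *
        ((∏ k, qT.p (τ k)) * ((∏ a, (qX1 a.1 a.2).p (f1 a)) *
          ∏ a, (qX2 a.1 a.2).p (f2 a))) *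
        (qS.p (sh1, s.2) * (Wch (f1 (sh1, τ (k1 s.1))) (f2 (s.2, τ (k1 s.1)))).p y)
      = (∏ k, qT.p (τ k)) * (ind (τ (k1 s.1) = t) * (qS.p (sh1, s.2) *
          ((∏ a, (qX1 a.1 a.2).p (f1 a)) * (ind (f1 (s.1, t) = x1) *
            ((∏ a, (qX2 a.1 a.2).p (f2 a)) * (ind (f2 (s.2, t) = x2) *
              (Wch (f1 (sh1, τ (k1 s.1))) (f2 (s.2, τ (k1 s.1)))).p y)))))) :=
    fun τ f1 f2 => by ring
  rw [Finset.sum_congr rfl fun τ _ => Finset.sum_congr rfl fun f1 _ =>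
    Finset.sum_congr rfl fun f2 _ => e0 τ f1 f2]
  have esub : ∀ τ : K → T, ∀ f1 : S1 × T → X1, ∀ f2 : S2 × T → X2,
      (∏ k, qT.p (τ k)) * (ind (τ (k1 s.1) = t) * (qS.p (sh1, s.2) *
          ((∏ a, (qX1 a.1 a.2).p (f1 a)) * (ind (f1 (s.1, t) = x1) *
            ((∏ a, (qX2 a.1 a.2).p (f2 a)) * (ind (f2 (s.2, t) = x2) *
              (Wch (f1 (sh1, τ (k1 s.1))) (f2 (s.2, τ (k1 s.1)))).p y))))))
      = (∏ k, qT.p (τ k)) * (ind (τ (k1 s.1) = t) * (qS.p (sh1, s.2) *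
          ((∏ a, (qX1 a.1 a.2).p (f1 a)) * (ind (f1 (s.1, t) = x1) *
            ((∏ a, (qX2 a.1 a.2).p (f2 a)) * (ind (f2 (s.2, t) = x2) *
              (Wch (f1 (sh1, t)) (f2 (s.2, t))).p y)))))) :=
    fun τ f1 f2 => congrArg (fun z => (∏ k, qT.p (τ k)) * z)
      (ind_mul_eq fun h => by rw [h])
  rw [Finset.sum_congr rfl fun τ _ => Finset.sum_congr rfl fun f1 _ =>
    Finset.sum_congr rfl fun f2 _ => esub τ f1 f2]
  have e2 : ∀ τ : K → T,
      (∑ f1 : S1 × T → X1, ∑ f2 : S2 × T → X2,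
        (∏ k, qT.p (τ k)) * (ind (τ (k1 s.1) = t) * (qS.p (sh1, s.2) *
          ((∏ a, (qX1 a.1 a.2).p (f1 a)) * (ind (f1 (s.1, t) = x1) *
            ((∏ a, (qX2 a.1 a.2).p (f2 a)) * (ind (f2 (s.2, t) = x2) *
              (Wch (f1 (sh1, t)) (f2 (s.2, t))).p y)))))))
      = (∏ k, qT.p (τ k)) * (ind (τ (k1 s.1) = t) * (qS.p (sh1, s.2) *
          ((qX1 s.1 t).p x1 * ((qX2 s.2 t).p x2 * qb1 qX1 Wch t y x2 sh1)))) := by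
    intro τ
    simp only [← Finset.mul_sum]
    rw [inner_one qX1 qX2 Wch s t x1 x2 y sh1 hs1]
  rw [Finset.sum_congr rfl fun τ _ => e2 τ]
  have e3 : ∀ τ : K → T,
      (∏ k, qT.p (τ k)) * (ind (τ (k1 s.1) = t) * (qS.p (sh1, s.2) *
          ((qX1 s.1 t).p x1 * ((qX2 s.2 t).p x2 * qb1 qX1 Wch t y x2 sh1))))
      = (qS.p (sh1, s.2) * ((qX1 s.1 t).p x1 * ((qX2 s.2 t).p x2 *
          qb1 qX1 Wch t y x2 sh1))) * ((∏ k, qT.p (τ k)) * ind (τ (k1 s.1) = t)) :=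
    fun τ => by ring
  rw [Finset.sum_congr rfl fun τ _ => e3 τ, ← Finset.mul_sum,
    sum_pi_pin (fun (_ : K) t' => qT.p t') (fun _ => qT.sum_eq_one) (k1 s.1) t]
  ring

lemma VE2 (sh2 : S2) (hs2 : sh2 ≠ s.2) :
    Vc qS qT qX1 qX2 Wch k1 s t x1 x2 y (s.1, sh2)
      = (qT.p t * ((qX1 s.1 t).p x1 * (qX2 s.2 t).p x2)) *
          (qS.p (s.1, sh2) * qb2 qX2 Wch t y x1 sh2) := by
  unfold Vc chi Pw PT PF1 PF2 gw
  rw [sum_CB]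
  dsimp only
  have e0 : ∀ τ : K → T, ∀ f1 : S1 × T → X1, ∀ f2 : S2 × T → X2,
      ind (τ (k1 s.1) = t) * (ind (f1 (s.1, t) = x1) * ind (f2 (s.2, t) = x2)) *
        ((∏ k, qT.p (τ k)) * ((∏ a, (qX1 a.1 a.2).p (f1 a)) *
          ∏ a, (qX2 a.1 a.2).p (f2 a))) *
        (qS.p (s.1, sh2) * (Wch (f1 (s.1, τ (k1 s.1))) (f2 (sh2, τ (k1 s.1)))).p y)
      = (∏ k, qT.p (τ k)) * (ind (τ (k1 s.1) = t) * (qS.p (s.1, sh2) *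
          ((∏ a, (qX1 a.1 a.2).p (f1 a)) * (ind (f1 (s.1, t) = x1) *
            ((∏ a, (qX2 a.1 a.2).p (f2 a)) * (ind (f2 (s.2, t) = x2) *
              (Wch (f1 (s.1, τ (k1 s.1))) (f2 (sh2, τ (k1 s.1)))).p y)))))) :=
    fun τ f1 f2 => by ring
  rw [Finset.sum_congr rfl fun τ _ => Finset.sum_congr rfl fun f1 _ =>
    Finset.sum_congr rfl fun f2 _ => e0 τ f1 f2]
  have esub : ∀ τ : K → T, ∀ f1 : S1 × T → X1, ∀ f2 : S2 × T → X2,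
      (∏ k, qT.p (τ k)) * (ind (τ (k1 s.1) = t) * (qS.p (s.1, sh2) *
          ((∏ a, (qX1 a.1 a.2).p (f1 a)) * (ind (f1 (s.1, t) = x1) *
            ((∏ a, (qX2 a.1 a.2).p (f2 a)) * (ind (f2 (s.2, t) = x2) *
              (Wch (f1 (s.1, τ (k1 s.1))) (f2 (sh2, τ (k1 s.1)))).p y))))))
      = (∏ k, qT.p (τ k)) * (ind (τ (k1 s.1) = t) * (qS.p (s.1, sh2) *
          ((∏ a, (qX1 a.1 a.2).p (f1 a)) * (ind (f1 (s.1, t) = x1) *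
            ((∏ a, (qX2 a.1 a.2).p (f2 a)) * (ind (f2 (s.2, t) = x2) *
              (Wch (f1 (s.1, t)) (f2 (sh2, t))).p y)))))) :=
    fun τ f1 f2 => congrArg (fun z => (∏ k, qT.p (τ k)) * z)
      (ind_mul_eq fun h => by rw [h])
  rw [Finset.sum_congr rfl fun τ _ => Finset.sum_congr rfl fun f1 _ =>
    Finset.sum_congr rfl fun f2 _ => esub τ f1 f2]
  have e2 : ∀ τ : K → T,
      (∑ f1 : S1 × T → X1, ∑ f2 : S2 × T → X2,
        (∏ k, qT.p (τ k)) * (ind (τ (k1 s.1) = t) * (qS.p (s.1, sh2) *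
          ((∏ a, (qX1 a.1 a.2).p (f1 a)) * (ind (f1 (s.1, t) = x1) *
            ((∏ a, (qX2 a.1 a.2).p (f2 a)) * (ind (f2 (s.2, t) = x2) *
              (Wch (f1 (s.1, t)) (f2 (sh2, t))).p y)))))))
      = (∏ k, qT.p (τ k)) * (ind (τ (k1 s.1) = t) * (qS.p (s.1, sh2) *
          ((qX1 s.1 t).p x1 * ((qX2 s.2 t).p x2 * qb2 qX2 Wch t y x1 sh2)))) := by
    intro τ
    simp only [← Finset.mul_sum]
    rw [inner_two qX1 qX2 Wch s t x1 x2 y sh2 hs2]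
  rw [Finset.sum_congr rfl fun τ _ => e2 τ]
  have e3 : ∀ τ : K → T,
      (∏ k, qT.p (τ k)) * (ind (τ (k1 s.1) = t) * (qS.p (s.1, sh2) *
          ((qX1 s.1 t).p x1 * ((qX2 s.2 t).p x2 * qb2 qX2 Wch t y x1 sh2))))
      = (qS.p (s.1, sh2) * ((qX1 s.1 t).p x1 * ((qX2 s.2 t).p x2 *
          qb2 qX2 Wch t y x1 sh2))) * ((∏ k, qT.p (τ k)) * ind (τ (k1 s.1) = t)) :=
    fun τ => by ring
  rw [Finset.sum_congr rfl fun τ _ => e3 τ, ← Finset.mul_sum,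
    sum_pi_pin (fun (_ : K) t' => qT.p t') (fun _ => qT.sum_eq_one) (k1 s.1) t]
  ring

lemma VE3 (sh : S1 × S2) (hs1 : sh.1 ≠ s.1) (hs2 : sh.2 ≠ s.2)
    (hkk : k1 sh.1 = k1 s.1) :
    Vc qS qT qX1 qX2 Wch k1 s t x1 x2 y sh
      = (qT.p t * ((qX1 s.1 t).p x1 * (qX2 s.2 t).p x2)) *
          (qS.p sh * qtl qX1 qX2 Wch t y sh) := by
  unfold Vc chi Pw PT PF1 PF2 gw
  rw [sum_CB]
  dsimp only
  rw [hkk]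
  have e0 : ∀ τ : K → T, ∀ f1 : S1 × T → X1, ∀ f2 : S2 × T → X2,
      ind (τ (k1 s.1) = t) * (ind (f1 (s.1, t) = x1) * ind (f2 (s.2, t) = x2)) *
        ((∏ k, qT.p (τ k)) * ((∏ a, (qX1 a.1 a.2).p (f1 a)) *
          ∏ a, (qX2 a.1 a.2).p (f2 a))) *
        (qS.p sh * (Wch (f1 (sh.1, τ (k1 s.1))) (f2 (sh.2, τ (k1 s.1)))).p y)
      = (∏ k, qT.p (τ k)) * (ind (τ (k1 s.1) = t) * (qS.p sh *
          ((∏ a, (qX1 a.1 a.2).p (f1 a)) * (ind (f1 (s.1, t) = x1) *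
            ((∏ a, (qX2 a.1 a.2).p (f2 a)) * (ind (f2 (s.2, t) = x2) *
              (Wch (f1 (sh.1, τ (k1 s.1))) (f2 (sh.2, τ (k1 s.1)))).p y)))))) :=
    fun τ f1 f2 => by ring
  rw [Finset.sum_congr rfl fun τ _ => Finset.sum_congr rfl fun f1 _ =>
    Finset.sum_congr rfl fun f2 _ => e0 τ f1 f2]
  have esub : ∀ τ : K → T, ∀ f1 : S1 × T → X1, ∀ f2 : S2 × T → X2,
      (∏ k, qT.p (τ k)) * (ind (τ (k1 s.1) = t) * (qS.p sh *
          ((∏ a, (qX1 a.1 a.2).p (f1 a)) * (ind (f1 (s.1, t) = x1) *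
            ((∏ a, (qX2 a.1 a.2).p (f2 a)) * (ind (f2 (s.2, t) = x2) *
              (Wch (f1 (sh.1, τ (k1 s.1))) (f2 (sh.2, τ (k1 s.1)))).p y))))))
      = (∏ k, qT.p (τ k)) * (ind (τ (k1 s.1) = t) * (qS.p sh *
          ((∏ a, (qX1 a.1 a.2).p (f1 a)) * (ind (f1 (s.1, t) = x1) *
            ((∏ a, (qX2 a.1 a.2).p (f2 a)) * (ind (f2 (s.2, t) = x2) *
              (Wch (f1 (sh.1, t)) (f2 (sh.2, t))).p y)))))) :=
    fun τ f1 f2 => congrArg (fun z => (∏ k, qT.p (τ k)) * z)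
      (ind_mul_eq fun h => by rw [h])
  rw [Finset.sum_congr rfl fun τ _ => Finset.sum_congr rfl fun f1 _ =>
    Finset.sum_congr rfl fun f2 _ => esub τ f1 f2]
  have e2 : ∀ τ : K → T,
      (∑ f1 : S1 × T → X1, ∑ f2 : S2 × T → X2,
        (∏ k, qT.p (τ k)) * (ind (τ (k1 s.1) = t) * (qS.p sh *
          ((∏ a, (qX1 a.1 a.2).p (f1 a)) * (ind (f1 (s.1, t) = x1) *
            ((∏ a, (qX2 a.1 a.2).p (f2 a)) * (ind (f2 (s.2, t) = x2) *
              (Wch (f1 (sh.1, t)) (f2 (sh.2, t))).p y)))))))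
      = (∏ k, qT.p (τ k)) * (ind (τ (k1 s.1) = t) * (qS.p sh *
          ((qX1 s.1 t).p x1 * ((qX2 s.2 t).p x2 * qtl qX1 qX2 Wch t y sh)))) := by
    intro τ
    simp only [← Finset.mul_sum]
    rw [inner_fresh qX1 qX2 Wch s t x1 x2 y sh hs1 hs2 t]
  rw [Finset.sum_congr rfl fun τ _ => e2 τ]
  have e3 : ∀ τ : K → T,
      (∏ k, qT.p (τ k)) * (ind (τ (k1 s.1) = t) * (qS.p sh *
          ((qX1 s.1 t).p x1 * ((qX2 s.2 t).p x2 * qtl qX1 qX2 Wch t y sh))))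
      = (qS.p sh * ((qX1 s.1 t).p x1 * ((qX2 s.2 t).p x2 *
          qtl qX1 qX2 Wch t y sh))) * ((∏ k, qT.p (τ k)) * ind (τ (k1 s.1) = t)) :=
    fun τ => by ring
  rw [Finset.sum_congr rfl fun τ _ => e3 τ, ← Finset.mul_sum,
    sum_pi_pin (fun (_ : K) t' => qT.p t') (fun _ => qT.sum_eq_one) (k1 s.1) t]
  ring

lemma VE4 (sh : S1 × S2) (hs1 : sh.1 ≠ s.1) (hs2 : sh.2 ≠ s.2)
    (hkk : k1 sh.1 ≠ k1 s.1) :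
    Vc qS qT qX1 qX2 Wch k1 s t x1 x2 y sh
      = (qT.p t * ((qX1 s.1 t).p x1 * (qX2 s.2 t).p x2)) *
          (qS.p sh * ∑ t', qT.p t' * qtl qX1 qX2 Wch t' y sh) := by
  unfold Vc chi Pw PT PF1 PF2 gw
  rw [sum_CB]
  dsimp only
  have e0 : ∀ τ : K → T, ∀ f1 : S1 × T → X1, ∀ f2 : S2 × T → X2,
      ind (τ (k1 s.1) = t) * (ind (f1 (s.1, t) = x1) * ind (f2 (s.2, t) = x2)) *
        ((∏ k, qT.p (τ k)) * ((∏ a, (qX1 a.1 a.2).p (f1 a)) *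
          ∏ a, (qX2 a.1 a.2).p (f2 a))) *
        (qS.p sh * (Wch (f1 (sh.1, τ (k1 sh.1))) (f2 (sh.2, τ (k1 sh.1)))).p y)
      = (∏ k, qT.p (τ k)) * (ind (τ (k1 s.1) = t) * (qS.p sh *
          ((∏ a, (qX1 a.1 a.2).p (f1 a)) * (ind (f1 (s.1, t) = x1) *
            ((∏ a, (qX2 a.1 a.2).p (f2 a)) * (ind (f2 (s.2, t) = x2) *
              (Wch (f1 (sh.1, τ (k1 sh.1))) (f2 (sh.2, τ (k1 sh.1)))).p y)))))) :=
    fun τ f1 f2 => by ring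
  rw [Finset.sum_congr rfl fun τ _ => Finset.sum_congr rfl fun f1 _ =>
    Finset.sum_congr rfl fun f2 _ => e0 τ f1 f2]
  have e2 : ∀ τ : K → T,
      (∑ f1 : S1 × T → X1, ∑ f2 : S2 × T → X2,
        (∏ k, qT.p (τ k)) * (ind (τ (k1 s.1) = t) * (qS.p sh *
          ((∏ a, (qX1 a.1 a.2).p (f1 a)) * (ind (f1 (s.1, t) = x1) *
            ((∏ a, (qX2 a.1 a.2).p (f2 a)) * (ind (f2 (s.2, t) = x2) *
              (Wch (f1 (sh.1, τ (k1 sh.1))) (f2 (sh.2, τ (k1 sh.1)))).p y)))))))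
      = (∏ k, qT.p (τ k)) * (ind (τ (k1 s.1) = t) * (qS.p sh *
          ((qX1 s.1 t).p x1 * ((qX2 s.2 t).p x2 *
            qtl qX1 qX2 Wch (τ (k1 sh.1)) y sh)))) := by
    intro τ
    simp only [← Finset.mul_sum]
    rw [inner_fresh qX1 qX2 Wch s t x1 x2 y sh hs1 hs2 (τ (k1 sh.1))]
  rw [Finset.sum_congr rfl fun τ _ => e2 τ]
  have e3 : ∀ τ : K → T,
      (∏ k, qT.p (τ k)) * (ind (τ (k1 s.1) = t) * (qS.p sh *
          ((qX1 s.1 t).p x1 * ((qX2 s.2 t).p x2 * qtl qX1 qX2 Wch (τ (k1 sh.1)) y sh))))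
      = (∏ k, qT.p (τ k)) * (ind (τ (k1 s.1) = t) *
          ((fun t' => qS.p sh * ((qX1 s.1 t).p x1 * ((qX2 s.2 t).p x2 *
            qtl qX1 qX2 Wch t' y sh))) (τ (k1 sh.1)))) :=
    fun τ => rfl
  rw [Finset.sum_congr rfl fun τ _ => e3 τ]
  rw [sum_pi_pin_eval (fun (_ : K) t' => qT.p t') (fun _ => qT.sum_eq_one)
    (Ne.symm hkk) t
    (fun t' => qS.p sh * ((qX1 s.1 t).p x1 * ((qX2 s.2 t).p x2 *
      qtl qX1 qX2 Wch t' y sh)))]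
  rw [show (∑ b, qT.p b * (qS.p sh * ((qX1 s.1 t).p x1 * ((qX2 s.2 t).p x2 *
      qtl qX1 qX2 Wch b y sh))))
      = (qS.p sh * ((qX1 s.1 t).p x1 * ((qX2 s.2 t).p x2 *
          ∑ t', qT.p t' * qtl qX1 qX2 Wch t' y sh))) from by
    simp only [Finset.mul_sum]
    exact Finset.sum_congr rfl fun b _ => by ring]
  ring

end VClass

section JBound

variable {S1 S2 K T X1 X2 Y : Type}
  [Fintype S1] [Fintype S2] [Fintype K] [Fintype T]
  [Fintype X1] [Fintype X2] [Fintype Y]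
  [DecidableEq S1] [DecidableEq S2] [DecidableEq K] [DecidableEq T]

variable (qS : FinPMF (S1 × S2)) (qT : FinPMF T)
  (qX1 : S1 → T → FinPMF X1) (qX2 : S2 → T → FinPMF X2) (Wch : X1 → X2 → FinPMF Y)
  (k1 : S1 → K)

lemma sum_filter_snd {A B : Type*} [Fintype A] [Fintype B] [DecidableEq B]
    (c : B) (F : A × B → ℝ) :
    ∑ sh ∈ Finset.univ.filter (fun sh : A × B => sh.2 = c), F sh = ∑ a : A, F (a, c) := by
  rw [Finset.sum_filter, Fintype.sum_prod_type]
  exact Finset.sum_congr rfl fun a _ => by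
    rw [Finset.sum_ite_eq' Finset.univ c (fun b => F (a, b))]
    simp

lemma sum_filter_fst {A B : Type*} [Fintype A] [Fintype B] [DecidableEq A]
    (c : A) (F : A × B → ℝ) :
    ∑ sh ∈ Finset.univ.filter (fun sh : A × B => sh.1 = c), F sh = ∑ b : B, F (c, b) := by
  rw [Finset.sum_filter, Fintype.sum_prod_type_right]
  exact Finset.sum_congr rfl fun b _ => by
    rw [Finset.sum_ite_eq' Finset.univ c (fun a => F (a, b))]
    simp

variable (s : S1 × S2) (t : T) (x1 : X1) (x2 : X2) (y : Y)

lemma Vc_nonneg (sh : S1 × S2) : 0 ≤ Vc qS qT qX1 qX2 Wch k1 s t x1 x2 y sh :=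
  Finset.sum_nonneg fun ω _ => mul_nonneg (mul_nonneg
    (chi_nonneg k1 s t x1 x2 ω) (Pw_nonneg qT qX1 qX2 ω)) (gw_nonneg qS Wch k1 ω y sh)

lemma Vc_zero (sh : S1 × S2) (h0 : qS.p sh = 0) :
    Vc qS qT qX1 qX2 Wch k1 s t x1 x2 y sh = 0 := by
  unfold Vc gw
  rw [h0]
  simp

lemma Jsum_eq :
    (∑ ω : CB S1 S2 K T X1 X2,
      chi k1 s t x1 x2 ω * Pw qT qX1 qX2 ω * Jw qS Wch k1 ω y s)
    = ∑ sh ∈ Finset.univ.erase s, Vc qS qT qX1 qX2 Wch k1 s t x1 x2 y sh := by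
  unfold Jw Vc
  rw [Finset.sum_congr rfl fun ω _ => Finset.mul_sum
    (Finset.univ.erase s) (gw qS Wch k1 ω y) (chi k1 s t x1 x2 ω * Pw qT qX1 qX2 ω)]
  rw [Finset.sum_comm]

lemma Jbound (hsupp : ∀ sh1 : S1, k1 sh1 ≠ k1 s.1 → qS.p (sh1, s.2) = 0) :
    (∑ sh ∈ Finset.univ.erase s, Vc qS qT qX1 qX2 Wch k1 s t x1 x2 y sh)
      ≤ (qT.p t * ((qX1 s.1 t).p x1 * (qX2 s.2 t).p x2)) *
          (betA qS qX1 Wch s.2 t y x2 + betB qS qX2 Wch s.1 t y x1 +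
            gamC qS qX1 qX2 Wch k1 (k1 s.1) t y + delD qS qT qX1 qX2 Wch y) := by
  set prev := qT.p t * ((qX1 s.1 t).p x1 * (qX2 s.2 t).p x2) with hprevdef
  have hprev : 0 ≤ prev :=
    mul_nonneg (qT.nonneg t) (mul_nonneg ((qX1 s.1 t).nonneg x1) ((qX2 s.2 t).nonneg x2))
  set V := Vc qS qT qX1 qX2 Wch k1 s t x1 x2 y with hVdef
  -- partition the erase set
  rw [← Finset.sum_filter_add_sum_filter_not (Finset.univ.erase s)
    (fun sh => sh.2 = s.2) V]
  rw [← Finset.sum_filter_add_sum_filter_not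
    ((Finset.univ.erase s).filter (fun sh => ¬ sh.2 = s.2))
    (fun sh => sh.1 = s.1) V]
  rw [← Finset.sum_filter_add_sum_filter_not
    (((Finset.univ.erase s).filter (fun sh => ¬ sh.2 = s.2)).filter
      (fun sh => ¬ sh.1 = s.1))
    (fun sh => k1 sh.1 = k1 s.1) V]
  have bound1 :
      (∑ sh ∈ (Finset.univ.erase s).filter (fun sh => sh.2 = s.2), V sh)
        ≤ prev * betA qS qX1 Wch s.2 t y x2 := by
    have hpt : ∀ sh ∈ (Finset.univ.erase s).filter (fun sh => sh.2 = s.2),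
        V sh ≤ prev * (qS.p sh * qb1 qX1 Wch t y x2 sh.1) := by
      intro sh hsh
      rw [Finset.mem_filter, Finset.mem_erase] at hsh
      obtain ⟨⟨hne, _⟩, h2⟩ := hsh
      have h1 : sh.1 ≠ s.1 := fun hc => hne (Prod.ext hc h2)
      have hshr : sh = (sh.1, s.2) := by rw [← h2]
      by_cases hkc : k1 sh.1 = k1 s.1
      · rw [hVdef, hshr, VE1 qS qT qX1 qX2 Wch k1 s t x1 x2 y sh.1 h1 hkc, ← hprevdef,
          ← hshr]
      · rw [hVdef, hshr, Vc_zero qS qT qX1 qX2 Wch k1 s t x1 x2 y _ (hsupp sh.1 hkc)]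
        exact mul_nonneg hprev (mul_nonneg (qS.nonneg _) (qb1_nonneg qX1 Wch t y x2 _))
    refine le_trans (Finset.sum_le_sum hpt) ?_
    have hext : (∑ sh ∈ (Finset.univ.erase s).filter (fun sh => sh.2 = s.2),
        prev * (qS.p sh * qb1 qX1 Wch t y x2 sh.1))
        ≤ ∑ sh ∈ Finset.univ.filter (fun sh : S1 × S2 => sh.2 = s.2),
            prev * (qS.p sh * qb1 qX1 Wch t y x2 sh.1) := by
      refine Finset.sum_le_sum_of_subset_of_nonneg ?_ ?_
      · intro sh hsh
        rw [Finset.mem_filter, Finset.mem_erase] at hsh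
        rw [Finset.mem_filter]
        exact ⟨Finset.mem_univ sh, hsh.2⟩
      · intro sh _ _
        exact mul_nonneg hprev (mul_nonneg (qS.nonneg sh) (qb1_nonneg qX1 Wch t y x2 sh.1))
    refine le_trans hext ?_
    rw [sum_filter_snd s.2 (fun sh => prev * (qS.p sh * qb1 qX1 Wch t y x2 sh.1))]
    rw [← Finset.mul_sum]
    unfold betA
    exact le_of_eq rfl
  have bound2 :
      (∑ sh ∈ ((Finset.univ.erase s).filter (fun sh => ¬ sh.2 = s.2)).filter
          (fun sh => sh.1 = s.1), V sh)
        ≤ prev * betB qS qX2 Wch s.1 t y x1 := by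
    have hpt : ∀ sh ∈ ((Finset.univ.erase s).filter (fun sh => ¬ sh.2 = s.2)).filter
        (fun sh => sh.1 = s.1),
        V sh ≤ prev * (qS.p sh * qb2 qX2 Wch t y x1 sh.2) := by
      intro sh hsh
      rw [Finset.mem_filter, Finset.mem_filter, Finset.mem_erase] at hsh
      obtain ⟨⟨⟨_, _⟩, h2⟩, h1⟩ := hsh
      have hshr : sh = (s.1, sh.2) := by rw [← h1]
      rw [hVdef, hshr, VE2 qS qT qX1 qX2 Wch k1 s t x1 x2 y sh.2 h2, ← hprevdef, ← hshr]
    refine le_trans (Finset.sum_le_sum hpt) ?_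
    have hext : (∑ sh ∈ ((Finset.univ.erase s).filter (fun sh => ¬ sh.2 = s.2)).filter
          (fun sh => sh.1 = s.1), prev * (qS.p sh * qb2 qX2 Wch t y x1 sh.2))
        ≤ ∑ sh ∈ Finset.univ.filter (fun sh : S1 × S2 => sh.1 = s.1),
            prev * (qS.p sh * qb2 qX2 Wch t y x1 sh.2) := by
      refine Finset.sum_le_sum_of_subset_of_nonneg ?_ ?_
      · intro sh hsh
        rw [Finset.mem_filter, Finset.mem_filter, Finset.mem_erase] at hsh
        rw [Finset.mem_filter]
        exact ⟨Finset.mem_univ sh, hsh.2⟩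
      · intro sh _ _
        exact mul_nonneg hprev (mul_nonneg (qS.nonneg sh) (qb2_nonneg qX2 Wch t y x1 sh.2))
    refine le_trans hext ?_
    rw [sum_filter_fst s.1 (fun sh => prev * (qS.p sh * qb2 qX2 Wch t y x1 sh.2))]
    rw [← Finset.mul_sum]
    unfold betB
    exact le_of_eq rfl
  have bound3 :
      (∑ sh ∈ (((Finset.univ.erase s).filter (fun sh => ¬ sh.2 = s.2)).filter
          (fun sh => ¬ sh.1 = s.1)).filter (fun sh => k1 sh.1 = k1 s.1), V sh)
        ≤ prev * gamC qS qX1 qX2 Wch k1 (k1 s.1) t y := by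
    have hpt : ∀ sh ∈ (((Finset.univ.erase s).filter (fun sh => ¬ sh.2 = s.2)).filter
        (fun sh => ¬ sh.1 = s.1)).filter (fun sh => k1 sh.1 = k1 s.1),
        V sh ≤ prev * (ind (k1 sh.1 = k1 s.1) * (qS.p sh * qtl qX1 qX2 Wch t y sh)) := by
      intro sh hsh
      rw [Finset.mem_filter, Finset.mem_filter, Finset.mem_filter,
        Finset.mem_erase] at hsh
      obtain ⟨⟨⟨⟨_, _⟩, h2⟩, h1⟩, hkc⟩ := hsh
      rw [hVdef, VE3 qS qT qX1 qX2 Wch k1 s t x1 x2 y sh h1 h2 hkc, ← hprevdef,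
        ind_of hkc, one_mul]
    refine le_trans (Finset.sum_le_sum hpt) ?_
    have hext : (∑ sh ∈ (((Finset.univ.erase s).filter (fun sh => ¬ sh.2 = s.2)).filter
          (fun sh => ¬ sh.1 = s.1)).filter (fun sh => k1 sh.1 = k1 s.1),
          prev * (ind (k1 sh.1 = k1 s.1) * (qS.p sh * qtl qX1 qX2 Wch t y sh)))
        ≤ ∑ sh : S1 × S2,
            prev * (ind (k1 sh.1 = k1 s.1) * (qS.p sh * qtl qX1 qX2 Wch t y sh)) := by
      refine Finset.sum_le_sum_of_subset_of_nonneg (Finset.subset_univ _) ?_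
      intro sh _ _
      exact mul_nonneg hprev (mul_nonneg (ind_nonneg _)
        (mul_nonneg (qS.nonneg sh) (qtl_nonneg qX1 qX2 Wch t y sh)))
    refine le_trans hext ?_
    rw [← Finset.mul_sum]
    unfold gamC
    exact le_of_eq rfl
  have bound4 :
      (∑ sh ∈ (((Finset.univ.erase s).filter (fun sh => ¬ sh.2 = s.2)).filter
          (fun sh => ¬ sh.1 = s.1)).filter (fun sh => ¬ k1 sh.1 = k1 s.1), V sh)
        ≤ prev * delD qS qT qX1 qX2 Wch y := by
    have hpt : ∀ sh ∈ (((Finset.univ.erase s).filter (fun sh => ¬ sh.2 = s.2)).filter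
        (fun sh => ¬ sh.1 = s.1)).filter (fun sh => ¬ k1 sh.1 = k1 s.1),
        V sh ≤ prev * (qS.p sh * ∑ t', qT.p t' * qtl qX1 qX2 Wch t' y sh) := by
      intro sh hsh
      rw [Finset.mem_filter, Finset.mem_filter, Finset.mem_filter,
        Finset.mem_erase] at hsh
      obtain ⟨⟨⟨⟨_, _⟩, h2⟩, h1⟩, hkc⟩ := hsh
      rw [hVdef, VE4 qS qT qX1 qX2 Wch k1 s t x1 x2 y sh h1 h2 hkc, ← hprevdef]
    refine le_trans (Finset.sum_le_sum hpt) ?_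
    have hext : (∑ sh ∈ (((Finset.univ.erase s).filter (fun sh => ¬ sh.2 = s.2)).filter
          (fun sh => ¬ sh.1 = s.1)).filter (fun sh => ¬ k1 sh.1 = k1 s.1),
          prev * (qS.p sh * ∑ t', qT.p t' * qtl qX1 qX2 Wch t' y sh))
        ≤ ∑ sh : S1 × S2,
            prev * (qS.p sh * ∑ t', qT.p t' * qtl qX1 qX2 Wch t' y sh) := by
      refine Finset.sum_le_sum_of_subset_of_nonneg (Finset.subset_univ _) ?_
      intro sh _ _
      exact mul_nonneg hprev (mul_nonneg (qS.nonneg sh) (Finset.sum_nonneg fun t' _ =>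
        mul_nonneg (qT.nonneg t') (qtl_nonneg qX1 qX2 Wch t' y sh)))
    refine le_trans hext ?_
    rw [← Finset.mul_sum]
    unfold delD
    exact le_of_eq rfl
  linarith [bound1, bound2, bound3, bound4]

end JBound

section PerSY

variable {S1 S2 K T X1 X2 Y : Type}
  [Fintype S1] [Fintype S2] [Fintype K] [Fintype T]
  [Fintype X1] [Fintype X2] [Fintype Y]
  [DecidableEq S1] [DecidableEq S2] [DecidableEq K] [DecidableEq T]

variable (qS : FinPMF (S1 × S2)) (qT : FinPMF T)
  (qX1 : S1 → T → FinPMF X1) (qX2 : S2 → T → FinPMF X2) (Wch : X1 → X2 → FinPMF Y)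
  (k1 : S1 → K) (k2 : S2 → K)

lemma chi_total (s : S1 × S2) (ω : CB S1 S2 K T X1 X2) :
    ∑ r : T × X1 × X2, chi k1 s r.1 r.2.1 r.2.2 ω = 1 := by
  rw [Fintype.sum_prod_type]
  rw [Finset.sum_congr rfl fun t _ => Fintype.sum_prod_type
    (fun p : X1 × X2 => chi k1 s t p.1 p.2 ω)]
  unfold chi
  have e1 : ∀ t : T, ∀ x1 : X1,
      (∑ x2 : X2, ind (ω.1 (k1 s.1) = t) * (ind (ω.2.1 (s.1, t) = x1) *
        ind (ω.2.2 (s.2, t) = x2)))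
      = ind (ω.1 (k1 s.1) = t) * ind (ω.2.1 (s.1, t) = x1) := by
    intro t x1
    simp only [← Finset.mul_sum]
    rw [sum_ind_eq' (ω.2.2 (s.2, t)), mul_one]
  rw [Finset.sum_congr rfl fun t _ => Finset.sum_congr rfl fun x1 _ => e1 t x1]
  have e2 : ∀ t : T,
      (∑ x1 : X1, ind (ω.1 (k1 s.1) = t) * ind (ω.2.1 (s.1, t) = x1))
      = ind (ω.1 (k1 s.1) = t) := by
    intro t
    simp only [← Finset.mul_sum]
    rw [sum_ind_eq' (ω.2.1 (s.1, t)), mul_one]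
  rw [Finset.sum_congr rfl fun t _ => e2 t]
  exact sum_ind_eq' (ω.1 (k1 s.1))

lemma Pw_sum_one : ∑ ω : CB S1 S2 K T X1 X2, Pw qT qX1 qX2 ω = 1 := by
  unfold Pw PT PF1 PF2
  rw [sum_CB]
  dsimp only
  have e1 : ∀ τ : K → T, ∀ f1 : S1 × T → X1,
      (∑ f2 : S2 × T → X2, (∏ k, qT.p (τ k)) * ((∏ a, (qX1 a.1 a.2).p (f1 a)) *
        ∏ a, (qX2 a.1 a.2).p (f2 a)))
      = (∏ k, qT.p (τ k)) * (∏ a, (qX1 a.1 a.2).p (f1 a)) := by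
    intro τ f1
    simp only [← Finset.mul_sum]
    rw [sum_pi_one (fun (a : S2 × T) b => (qX2 a.1 a.2).p b)
      (fun a => (qX2 a.1 a.2).sum_eq_one), mul_one]
  rw [Finset.sum_congr rfl fun τ _ => Finset.sum_congr rfl fun f1 _ => e1 τ f1]
  have e2 : ∀ τ : K → T,
      (∑ f1 : S1 × T → X1, (∏ k, qT.p (τ k)) * ∏ a, (qX1 a.1 a.2).p (f1 a))
      = (∏ k, qT.p (τ k)) := by
    intro τ
    simp only [← Finset.mul_sum]
    rw [sum_pi_one (fun (a : S1 × T) b => (qX1 a.1 a.2).p b)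
      (fun a => (qX1 a.1 a.2).sum_eq_one), mul_one]
  rw [Finset.sum_congr rfl fun τ _ => e2 τ]
  exact sum_pi_one (fun (_ : K) t' => qT.p t') (fun _ => qT.sum_eq_one)

lemma qMAC_nonneg (s1 : S1) (s2 : S2) (t : T) (x1 : X1) (x2 : X2) (y : Y) :
    0 ≤ qMAC qS qT qX1 qX2 Wch s1 s2 t x1 x2 y :=
  mul_nonneg (mul_nonneg (mul_nonneg (mul_nonneg (qS.nonneg _) (qT.nonneg _))
    ((qX1 s1 t).nonneg _)) ((qX2 s2 t).nonneg _)) ((Wch x1 x2).nonneg _)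

lemma class_bound (s : S1 × S2) (t : T) (x1 : X1) (x2 : X2) (y : Y)
    (hqs : 0 < qS.p s) (hqt : 0 < qT.p t) (h1 : 0 < (qX1 s.1 t).p x1)
    (h2 : 0 < (qX2 s.2 t).p x2) (hW : 0 < (Wch x1 x2).p y)
    (hkk2 : k1 s.1 = k2 s.2)
    (hsupp : ∀ sh1 : S1, k1 sh1 ≠ k1 s.1 → qS.p (sh1, s.2) = 0) :
    (qT.p t * ((qX1 s.1 t).p x1 * (qX2 s.2 t).p x2)) *
      ((qS.p s * (Wch x1 x2).p y) ^ 2 /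
        (qS.p s * (Wch x1 x2).p y +
          (betA qS qX1 Wch s.2 t y x2 + betB qS qX2 Wch s.1 t y x1 +
            gamC qS qX1 qX2 Wch k1 (k1 s.1) t y + delD qS qT qX1 qX2 Wch y)))
    ≤ ∑ ω : CB S1 S2 K T X1 X2,
        chi k1 s t x1 x2 ω * Pw qT qX1 qX2 ω *
          (qS.p s * ((Wch (ω.2.1 (s.1, ω.1 (k1 s.1))) (ω.2.2 (s.2, ω.1 (k2 s.2)))).p y *
            (decW qS Wch k1 ω y).p s)) := by
  have hZ : 0 < qS.p s * (Wch x1 x2).p y := mul_pos hqs hW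
  have hSB : 0 ≤ betA qS qX1 Wch s.2 t y x2 + betB qS qX2 Wch s.1 t y x1 +
      gamC qS qX1 qX2 Wch k1 (k1 s.1) t y + delD qS qT qX1 qX2 Wch y := by
    have := betA_nonneg qS qX1 Wch s.2 t y x2
    have := betB_nonneg qS qX2 Wch s.1 t y x1
    have := gamC_nonneg qS qX1 qX2 Wch k1 (k1 s.1) t y
    have := delD_nonneg qS qT qX1 qX2 Wch y
    linarith
  have hpt : ∀ ω : CB S1 S2 K T X1 X2,
      chi k1 s t x1 x2 ω * Pw qT qX1 qX2 ω *
        (qS.p s * ((Wch (ω.2.1 (s.1, ω.1 (k1 s.1))) (ω.2.2 (s.2, ω.1 (k2 s.2)))).p y *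
          (decW qS Wch k1 ω y).p s))
      = chi k1 s t x1 x2 ω * Pw qT qX1 qX2 ω *
          ((qS.p s * (Wch x1 x2).p y) ^ 2 /
            (qS.p s * (Wch x1 x2).p y + Jw qS Wch k1 ω y s)) := by
    intro ω
    by_cases hc1 : ω.1 (k1 s.1) = t
    · by_cases hc2 : ω.2.1 (s.1, t) = x1
      · by_cases hc3 : ω.2.2 (s.2, t) = x2
        · have hgs : gw qS Wch k1 ω y s = qS.p s * (Wch x1 x2).p y := by
            unfold gw
            rw [hc1, hc2, hc3]
          have hGpos : 0 < Gw qS Wch k1 ω y := by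
            rw [Gw_eq qS Wch k1 ω y s, hgs]
            exact add_pos_of_pos_of_nonneg hZ (Jw_nonneg qS Wch k1 ω y s)
          have hdec : (decW qS Wch k1 ω y).p s
              = (qS.p s * (Wch x1 x2).p y) /
                  (qS.p s * (Wch x1 x2).p y + Jw qS Wch k1 ω y s) := by
            unfold decW
            rw [dif_pos hGpos]
            show gw qS Wch k1 ω y s / Gw qS Wch k1 ω y = _
            rw [Gw_eq qS Wch k1 ω y s, hgs]
          have hWenc : (Wch (ω.2.1 (s.1, ω.1 (k1 s.1)))
              (ω.2.2 (s.2, ω.1 (k2 s.2)))).p y = (Wch x1 x2).p y := by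
            rw [← hkk2, hc1, hc2, hc3]
          rw [hWenc, hdec]
          ring
        · unfold chi
          rw [ind_of_not hc3]
          ring
      · unfold chi
        rw [ind_of_not hc2]
        ring
    · unfold chi
      rw [ind_of_not hc1]
      ring
  rw [Finset.sum_congr rfl fun ω _ => hpt ω]
  have hcs := cs_bound (fun ω : CB S1 S2 K T X1 X2 => chi k1 s t x1 x2 ω * Pw qT qX1 qX2 ω)
    (fun ω => Jw qS Wch k1 ω y s) (qS.p s * (Wch x1 x2).p y)
    (betA qS qX1 Wch s.2 t y x2 + betB qS qX2 Wch s.1 t y x1 +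
      gamC qS qX1 qX2 Wch k1 (k1 s.1) t y + delD qS qT qX1 qX2 Wch y)
    hZ
    (fun ω => mul_nonneg (chi_nonneg k1 s t x1 x2 ω) (Pw_nonneg qT qX1 qX2 ω))
    (fun ω => Jw_nonneg qS Wch k1 ω y s) hSB ?hJ
  case hJ =>
    rw [Jsum_eq qS qT qX1 qX2 Wch k1 s t x1 x2 y,
      chi_mass qT qX1 qX2 k1 s t x1 x2]
    exact Jbound qS qT qX1 qX2 Wch k1 s t x1 x2 y hsupp
  rw [chi_mass qT qX1 qX2 k1 s t x1 x2] at hcs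
  exact hcs

lemma perSY (hk : ∀ s1 s2, 0 < qS.p (s1, s2) → k1 s1 = k2 s2) (s : S1 × S2) (y : Y) :
    (∑ t : T, ∑ x1 : X1, ∑ x2 : X2, qMAC qS qT qX1 qX2 Wch s.1 s.2 t x1 x2 y *
      (1 + (2:ℝ) ^ (hS1cS2 qS s.1 s.2 - iYX1cX2S2T qS qT qX1 qX2 Wch y x1 x2 s.2 t)
         + (2:ℝ) ^ (hS2cS1 qS s.1 s.2 - iYX2cX1S1T qS qT qX1 qX2 Wch y x1 x2 s.1 t)
         + (2:ℝ) ^ (hS1S2cK qS k1 s.1 s.2 -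
             iYX1X2cKT qS qT qX1 qX2 Wch k1 y x1 x2 (k1 s.1) t)
         + (2:ℝ) ^ (hS1S2 qS s.1 s.2 - iYX1X2 qS qT qX1 qX2 Wch y x1 x2))⁻¹)
    ≤ ∑ ω : CB S1 S2 K T X1 X2, Pw qT qX1 qX2 ω *
        (qS.p s * ((Wch (ω.2.1 (s.1, ω.1 (k1 s.1))) (ω.2.2 (s.2, ω.1 (k2 s.2)))).p y *
          (decW qS Wch k1 ω y).p s)) := by
  -- introduce the partition over revealed values
  have hins : ∀ ω : CB S1 S2 K T X1 X2,
      Pw qT qX1 qX2 ω *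
        (qS.p s * ((Wch (ω.2.1 (s.1, ω.1 (k1 s.1))) (ω.2.2 (s.2, ω.1 (k2 s.2)))).p y *
          (decW qS Wch k1 ω y).p s))
      = ∑ r : T × X1 × X2, chi k1 s r.1 r.2.1 r.2.2 ω * Pw qT qX1 qX2 ω *
          (qS.p s * ((Wch (ω.2.1 (s.1, ω.1 (k1 s.1))) (ω.2.2 (s.2, ω.1 (k2 s.2)))).p y *
            (decW qS Wch k1 ω y).p s)) := by
    intro ω
    rw [show (Pw qT qX1 qX2 ω *
        (qS.p s * ((Wch (ω.2.1 (s.1, ω.1 (k1 s.1))) (ω.2.2 (s.2, ω.1 (k2 s.2)))).p y *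
          (decW qS Wch k1 ω y).p s)))
        = (∑ r : T × X1 × X2, chi k1 s r.1 r.2.1 r.2.2 ω) * (Pw qT qX1 qX2 ω *
          (qS.p s * ((Wch (ω.2.1 (s.1, ω.1 (k1 s.1))) (ω.2.2 (s.2, ω.1 (k2 s.2)))).p y *
            (decW qS Wch k1 ω y).p s))) from by
      rw [chi_total k1 s ω, one_mul]]
    rw [Finset.sum_mul]
    exact Finset.sum_congr rfl fun r _ => by ring
  rw [Finset.sum_congr rfl fun ω _ => hins ω]
  conv_rhs => rw [Finset.sum_comm]
  -- now bound each class from below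
  have hclass : ∀ r : T × X1 × X2,
      qMAC qS qT qX1 qX2 Wch s.1 s.2 r.1 r.2.1 r.2.2 y *
        (1 + (2:ℝ) ^ (hS1cS2 qS s.1 s.2 -
            iYX1cX2S2T qS qT qX1 qX2 Wch y r.2.1 r.2.2 s.2 r.1)
          + (2:ℝ) ^ (hS2cS1 qS s.1 s.2 -
            iYX2cX1S1T qS qT qX1 qX2 Wch y r.2.1 r.2.2 s.1 r.1)
          + (2:ℝ) ^ (hS1S2cK qS k1 s.1 s.2 -
            iYX1X2cKT qS qT qX1 qX2 Wch k1 y r.2.1 r.2.2 (k1 s.1) r.1)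
          + (2:ℝ) ^ (hS1S2 qS s.1 s.2 - iYX1X2 qS qT qX1 qX2 Wch y r.2.1 r.2.2))⁻¹
      ≤ ∑ ω : CB S1 S2 K T X1 X2, chi k1 s r.1 r.2.1 r.2.2 ω * Pw qT qX1 qX2 ω *
          (qS.p s * ((Wch (ω.2.1 (s.1, ω.1 (k1 s.1))) (ω.2.2 (s.2, ω.1 (k2 s.2)))).p y *
            (decW qS Wch k1 ω y).p s)) := by
    intro r
    obtain ⟨t, x1, x2⟩ := r
    dsimp only
    have hRHSnn : (0:ℝ) ≤ ∑ ω : CB S1 S2 K T X1 X2,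
        chi k1 s t x1 x2 ω * Pw qT qX1 qX2 ω *
          (qS.p s * ((Wch (ω.2.1 (s.1, ω.1 (k1 s.1))) (ω.2.2 (s.2, ω.1 (k2 s.2)))).p y *
            (decW qS Wch k1 ω y).p s)) :=
      Finset.sum_nonneg fun ω _ => mul_nonneg (mul_nonneg (chi_nonneg k1 s t x1 x2 ω)
        (Pw_nonneg qT qX1 qX2 ω)) (mul_nonneg (qS.nonneg s) (mul_nonneg
          ((Wch _ _).nonneg y) ((decW qS Wch k1 ω y).nonneg s)))
    rcases (lt_or_ge 0 (qS.p s)) with hqs | hqs0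
    rotate_left
    · have h0 : qS.p s = 0 := le_antisymm hqs0 (qS.nonneg s)
      have hq0 : qMAC qS qT qX1 qX2 Wch s.1 s.2 t x1 x2 y = 0 := by
        unfold qMAC
        rw [Prod.mk.eta, h0]
        ring
      rw [hq0, zero_mul]
      exact hRHSnn
    rcases (lt_or_ge 0 (qT.p t)) with hqt | hqt0
    rotate_left
    · have h0 : qT.p t = 0 := le_antisymm hqt0 (qT.nonneg t)
      have hq0 : qMAC qS qT qX1 qX2 Wch s.1 s.2 t x1 x2 y = 0 := by
        unfold qMAC
        rw [h0]
        ring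
      rw [hq0, zero_mul]
      exact hRHSnn
    rcases (lt_or_ge 0 ((qX1 s.1 t).p x1)) with h1 | h10
    rotate_left
    · have h0 : (qX1 s.1 t).p x1 = 0 := le_antisymm h10 ((qX1 s.1 t).nonneg x1)
      have hq0 : qMAC qS qT qX1 qX2 Wch s.1 s.2 t x1 x2 y = 0 := by
        unfold qMAC
        rw [h0]
        ring
      rw [hq0, zero_mul]
      exact hRHSnn
    rcases (lt_or_ge 0 ((qX2 s.2 t).p x2)) with h2 | h20
    rotate_left
    · have h0 : (qX2 s.2 t).p x2 = 0 := le_antisymm h20 ((qX2 s.2 t).nonneg x2)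
      have hq0 : qMAC qS qT qX1 qX2 Wch s.1 s.2 t x1 x2 y = 0 := by
        unfold qMAC
        rw [h0]
        ring
      rw [hq0, zero_mul]
      exact hRHSnn
    rcases (lt_or_ge 0 ((Wch x1 x2).p y)) with hW | hW0
    rotate_left
    · have h0 : (Wch x1 x2).p y = 0 := le_antisymm hW0 ((Wch x1 x2).nonneg y)
      have hq0 : qMAC qS qT qX1 qX2 Wch s.1 s.2 t x1 x2 y = 0 := by
        unfold qMAC
        rw [h0]
        ring
      rw [hq0, zero_mul]
      exact hRHSnn
    -- positive case
    have hqs' : 0 < qS.p (s.1, s.2) := by rw [Prod.mk.eta]; exact hqs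
    have hkk2 : k1 s.1 = k2 s.2 := hk s.1 s.2 hqs'
    have hsupp : ∀ sh1 : S1, k1 sh1 ≠ k1 s.1 → qS.p (sh1, s.2) = 0 := by
      intro sh1 hne
      by_contra hc
      have hpos : 0 < qS.p (sh1, s.2) :=
        lt_of_le_of_ne (qS.nonneg _) (Ne.symm hc)
      exact hne ((hk sh1 s.2 hpos).trans hkk2.symm)
    have hinv := inv_sum_eq qS qT qX1 qX2 Wch hqs' hqt h1 h2 hW k1
    rw [hinv]
    have hqm : qMAC qS qT qX1 qX2 Wch s.1 s.2 t x1 x2 y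
        = qS.p s * qT.p t * (qX1 s.1 t).p x1 * (qX2 s.2 t).p x2 * (Wch x1 x2).p y := by
      unfold qMAC
      rw [Prod.mk.eta]
    rw [hqm]
    refine le_trans (le_of_eq ?_) (class_bound qS qT qX1 qX2 Wch k1 k2 s t x1 x2 y
      hqs hqt h1 h2 hW hkk2 hsupp)
    rw [show qS.p (s.1, s.2) = qS.p s from by rw [Prod.mk.eta]]
    have h1' := betA_nonneg qS qX1 Wch s.2 t y x2
    have h2' := betB_nonneg qS qX2 Wch s.1 t y x1
    have h3' := gamC_nonneg qS qX1 qX2 Wch k1 (k1 s.1) t y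
    have h4' := delD_nonneg qS qT qX1 qX2 Wch y
    have h5' : 0 < qS.p s * (Wch x1 x2).p y := mul_pos hqs hW
    have hD : qS.p s * (Wch x1 x2).p y +
        (betA qS qX1 Wch s.2 t y x2 + betB qS qX2 Wch s.1 t y x1 +
          gamC qS qX1 qX2 Wch k1 (k1 s.1) t y + delD qS qT qX1 qX2 Wch y) ≠ 0 := by
      nlinarith
    field_simp
  refine le_trans ?_ (Finset.sum_le_sum fun r _ => hclass r)
  rw [Fintype.sum_prod_type]
  refine le_of_eq (Finset.sum_congr rfl fun t _ => ?_)
  rw [Fintype.sum_prod_type]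

end PerSY

section MainAvg

variable {S1 S2 K T X1 X2 Y : Type}
  [Fintype S1] [Fintype S2] [Fintype K] [Fintype T]
  [Fintype X1] [Fintype X2] [Fintype Y]
  [DecidableEq S1] [DecidableEq S2] [DecidableEq K] [DecidableEq T]

variable (qS : FinPMF (S1 × S2)) (qT : FinPMF T)
  (qX1 : S1 → T → FinPMF X1) (qX2 : S2 → T → FinPMF X2) (Wch : X1 → X2 → FinPMF Y)
  (k1 : S1 → K) (k2 : S2 → K)

lemma main_avg (hk : ∀ s1 s2, 0 < qS.p (s1, s2) → k1 s1 = k2 s2) :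
    (∑ s1 : S1, ∑ s2 : S2, ∑ t : T, ∑ x1 : X1, ∑ x2 : X2, ∑ y : Y,
      qMAC qS qT qX1 qX2 Wch s1 s2 t x1 x2 y *
      (1 + (2:ℝ) ^ (hS1cS2 qS s1 s2 - iYX1cX2S2T qS qT qX1 qX2 Wch y x1 x2 s2 t)
         + (2:ℝ) ^ (hS2cS1 qS s1 s2 - iYX2cX1S1T qS qT qX1 qX2 Wch y x1 x2 s1 t)
         + (2:ℝ) ^ (hS1S2cK qS k1 s1 s2 -
             iYX1X2cKT qS qT qX1 qX2 Wch k1 y x1 x2 (k1 s1) t)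
         + (2:ℝ) ^ (hS1S2 qS s1 s2 - iYX1X2 qS qT qX1 qX2 Wch y x1 x2))⁻¹)
    ≤ ∑ ω : CB S1 S2 K T X1 X2, Pw qT qX1 qX2 ω * pcW qS Wch k1 k2 ω := by
  -- rewrite the right-hand side as a triple sum over (s, y, ω)
  have hpc : ∀ ω : CB S1 S2 K T X1 X2,
      Pw qT qX1 qX2 ω * pcW qS Wch k1 k2 ω
      = ∑ s : S1 × S2, ∑ y : Y, Pw qT qX1 qX2 ω *
          (qS.p s * ((Wch (ω.2.1 (s.1, ω.1 (k1 s.1))) (ω.2.2 (s.2, ω.1 (k2 s.2)))).p y *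
            (decW qS Wch k1 ω y).p s)) := by
    intro ω
    unfold pcW
    rw [Finset.mul_sum]
    exact Finset.sum_congr rfl fun s _ => by rw [Finset.mul_sum]
  rw [Finset.sum_congr rfl fun ω _ => hpc ω]
  conv_rhs => rw [Finset.sum_comm]
  have hswap : ∀ s : S1 × S2,
      (∑ ω : CB S1 S2 K T X1 X2, ∑ y : Y, Pw qT qX1 qX2 ω *
        (qS.p s * ((Wch (ω.2.1 (s.1, ω.1 (k1 s.1))) (ω.2.2 (s.2, ω.1 (k2 s.2)))).p y *
          (decW qS Wch k1 ω y).p s)))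
      = ∑ y : Y, ∑ ω : CB S1 S2 K T X1 X2, Pw qT qX1 qX2 ω *
          (qS.p s * ((Wch (ω.2.1 (s.1, ω.1 (k1 s.1))) (ω.2.2 (s.2, ω.1 (k2 s.2)))).p y *
            (decW qS Wch k1 ω y).p s)) := fun s => Finset.sum_comm
  rw [Finset.sum_congr rfl fun s _ => hswap s]
  -- rewrite the left-hand side as a sum over (s, y, t, x1, x2)
  rw [show (∑ s1 : S1, ∑ s2 : S2, ∑ t : T, ∑ x1 : X1, ∑ x2 : X2, ∑ y : Y,
      qMAC qS qT qX1 qX2 Wch s1 s2 t x1 x2 y *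
      (1 + (2:ℝ) ^ (hS1cS2 qS s1 s2 - iYX1cX2S2T qS qT qX1 qX2 Wch y x1 x2 s2 t)
         + (2:ℝ) ^ (hS2cS1 qS s1 s2 - iYX2cX1S1T qS qT qX1 qX2 Wch y x1 x2 s1 t)
         + (2:ℝ) ^ (hS1S2cK qS k1 s1 s2 -
             iYX1X2cKT qS qT qX1 qX2 Wch k1 y x1 x2 (k1 s1) t)
         + (2:ℝ) ^ (hS1S2 qS s1 s2 - iYX1X2 qS qT qX1 qX2 Wch y x1 x2))⁻¹)
      = ∑ s : S1 × S2, ∑ y : Y, ∑ t : T, ∑ x1 : X1, ∑ x2 : X2,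
        qMAC qS qT qX1 qX2 Wch s.1 s.2 t x1 x2 y *
        (1 + (2:ℝ) ^ (hS1cS2 qS s.1 s.2 - iYX1cX2S2T qS qT qX1 qX2 Wch y x1 x2 s.2 t)
           + (2:ℝ) ^ (hS2cS1 qS s.1 s.2 - iYX2cX1S1T qS qT qX1 qX2 Wch y x1 x2 s.1 t)
           + (2:ℝ) ^ (hS1S2cK qS k1 s.1 s.2 -
               iYX1X2cKT qS qT qX1 qX2 Wch k1 y x1 x2 (k1 s.1) t)
           + (2:ℝ) ^ (hS1S2 qS s.1 s.2 - iYX1X2 qS qT qX1 qX2 Wch y x1 x2))⁻¹ from ?_]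
  · exact Finset.sum_le_sum fun s _ => Finset.sum_le_sum fun y _ =>
      perSY qS qT qX1 qX2 Wch k1 k2 hk s y
  · rw [Fintype.sum_prod_type]
    refine Finset.sum_congr rfl fun s1 _ => Finset.sum_congr rfl fun s2 _ => ?_
    have e1 : ∀ t : T, ∀ x1 : X1,
        (∑ x2 : X2, ∑ y : Y, qMAC qS qT qX1 qX2 Wch s1 s2 t x1 x2 y *
          (1 + (2:ℝ) ^ (hS1cS2 qS s1 s2 - iYX1cX2S2T qS qT qX1 qX2 Wch y x1 x2 s2 t)
             + (2:ℝ) ^ (hS2cS1 qS s1 s2 - iYX2cX1S1T qS qT qX1 qX2 Wch y x1 x2 s1 t)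
             + (2:ℝ) ^ (hS1S2cK qS k1 s1 s2 -
                 iYX1X2cKT qS qT qX1 qX2 Wch k1 y x1 x2 (k1 s1) t)
             + (2:ℝ) ^ (hS1S2 qS s1 s2 - iYX1X2 qS qT qX1 qX2 Wch y x1 x2))⁻¹)
        = ∑ y : Y, ∑ x2 : X2, qMAC qS qT qX1 qX2 Wch s1 s2 t x1 x2 y *
          (1 + (2:ℝ) ^ (hS1cS2 qS s1 s2 - iYX1cX2S2T qS qT qX1 qX2 Wch y x1 x2 s2 t)
             + (2:ℝ) ^ (hS2cS1 qS s1 s2 - iYX2cX1S1T qS qT qX1 qX2 Wch y x1 x2 s1 t)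
             + (2:ℝ) ^ (hS1S2cK qS k1 s1 s2 -
                 iYX1X2cKT qS qT qX1 qX2 Wch k1 y x1 x2 (k1 s1) t)
             + (2:ℝ) ^ (hS1S2 qS s1 s2 - iYX1X2 qS qT qX1 qX2 Wch y x1 x2))⁻¹ :=
      fun t x1 => Finset.sum_comm
    rw [Finset.sum_congr rfl fun t _ => Finset.sum_congr rfl fun x1 _ => e1 t x1]
    have e2 : ∀ t : T,
        (∑ x1 : X1, ∑ y : Y, ∑ x2 : X2, qMAC qS qT qX1 qX2 Wch s1 s2 t x1 x2 y *
          (1 + (2:ℝ) ^ (hS1cS2 qS s1 s2 - iYX1cX2S2T qS qT qX1 qX2 Wch y x1 x2 s2 t)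
             + (2:ℝ) ^ (hS2cS1 qS s1 s2 - iYX2cX1S1T qS qT qX1 qX2 Wch y x1 x2 s1 t)
             + (2:ℝ) ^ (hS1S2cK qS k1 s1 s2 -
                 iYX1X2cKT qS qT qX1 qX2 Wch k1 y x1 x2 (k1 s1) t)
             + (2:ℝ) ^ (hS1S2 qS s1 s2 - iYX1X2 qS qT qX1 qX2 Wch y x1 x2))⁻¹)
        = ∑ y : Y, ∑ x1 : X1, ∑ x2 : X2, qMAC qS qT qX1 qX2 Wch s1 s2 t x1 x2 y *
          (1 + (2:ℝ) ^ (hS1cS2 qS s1 s2 - iYX1cX2S2T qS qT qX1 qX2 Wch y x1 x2 s2 t)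
             + (2:ℝ) ^ (hS2cS1 qS s1 s2 - iYX2cX1S1T qS qT qX1 qX2 Wch y x1 x2 s1 t)
             + (2:ℝ) ^ (hS1S2cK qS k1 s1 s2 -
                 iYX1X2cKT qS qT qX1 qX2 Wch k1 y x1 x2 (k1 s1) t)
             + (2:ℝ) ^ (hS1S2 qS s1 s2 - iYX1X2 qS qT qX1 qX2 Wch y x1 x2))⁻¹ :=
      fun t => Finset.sum_comm
    rw [Finset.sum_congr rfl fun t _ => e2 t]
    exact Finset.sum_comm

end MainAvg

end OneShotAux

open OneShotAux in
/-- One-shot joint source-channel coding over a MAC (Cover–El Gamal–Salehi form). -/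
theorem oneShot_jscc_mac (qS : FinPMF (S1 × S2)) (Wch : X1 → X2 → FinPMF Y)
    (k1 : S1 → K) (k2 : S2 → K)
    (hk : ∀ s1 s2, 0 < qS.p (s1, s2) → k1 s1 = k2 s2)
    (qT : FinPMF T) (qX1 : S1 → T → FinPMF X1) (qX2 : S2 → T → FinPMF X2) :
    ∃ (enc1 : S1 → FinPMF X1) (enc2 : S2 → FinPMF X2) (dec : Y → FinPMF (S1 × S2)),
      pCorrectMAC qS Wch enc1 enc2 dec ≥
        ∑ s1 : S1, ∑ s2 : S2, ∑ t : T, ∑ x1 : X1, ∑ x2 : X2, ∑ y : Y,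
          qMAC qS qT qX1 qX2 Wch s1 s2 t x1 x2 y *
          (1 + (2 : ℝ) ^ (hS1cS2 qS s1 s2 - iYX1cX2S2T qS qT qX1 qX2 Wch y x1 x2 s2 t)
             + (2 : ℝ) ^ (hS2cS1 qS s1 s2 - iYX2cX1S1T qS qT qX1 qX2 Wch y x1 x2 s1 t)
             + (2 : ℝ) ^ (hS1S2cK qS k1 s1 s2 -
                 iYX1X2cKT qS qT qX1 qX2 Wch k1 y x1 x2 (k1 s1) t)
             + (2 : ℝ) ^ (hS1S2 qS s1 s2 - iYX1X2 qS qT qX1 qX2 Wch y x1 x2))⁻¹ := by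
  classical
  haveI hneS : Nonempty (S1 × S2) := OneShotAux.FinPMF.nonempty qS
  haveI : Nonempty S1 := ⟨(Classical.arbitrary (S1 × S2)).1⟩
  haveI : Nonempty S2 := ⟨(Classical.arbitrary (S1 × S2)).2⟩
  haveI : Nonempty T := OneShotAux.FinPMF.nonempty qT
  haveI : Nonempty X1 :=
    OneShotAux.FinPMF.nonempty (qX1 (Classical.arbitrary S1) (Classical.arbitrary T))
  haveI : Nonempty X2 :=
    OneShotAux.FinPMF.nonempty (qX2 (Classical.arbitrary S2) (Classical.arbitrary T))
  haveI : Nonempty (CB S1 S2 K T X1 X2) := by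
    refine ⟨⟨fun _ => Classical.arbitrary T,
      fun _ => Classical.arbitrary X1, fun _ => Classical.arbitrary X2⟩⟩
  obtain ⟨ω, -, hωmax⟩ := Finset.exists_max_image Finset.univ
    (fun ω : CB S1 S2 K T X1 X2 => pcW qS Wch k1 k2 ω)
    ⟨Classical.arbitrary _, Finset.mem_univ _⟩
  refine ⟨encW1 k1 ω.1 ω.2.1, encW2 k2 ω.1 ω.2.2, decW qS Wch k1 ω, ?_⟩
  rw [ge_iff_le, pCorrect_eq qS Wch k1 k2 ω]
  refine le_trans (main_avg qS qT qX1 qX2 Wch k1 k2 hk) ?_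
  have hle : (∑ ω' : CB S1 S2 K T X1 X2, Pw qT qX1 qX2 ω' * pcW qS Wch k1 k2 ω')
      ≤ ∑ ω' : CB S1 S2 K T X1 X2, Pw qT qX1 qX2 ω' * pcW qS Wch k1 k2 ω :=
    Finset.sum_le_sum fun ω' _ =>
      mul_le_mul_of_nonneg_left (hωmax ω' (Finset.mem_univ ω')) (Pw_nonneg qT qX1 qX2 ω')
  refine le_trans hle ?_
  rw [← Finset.sum_mul, Pw_sum_one qT qX1 qX2, one_mul]
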